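/- arXiv:math/0503012 — 3 statements merged into one kernel-verified Lean document; each statement's English description precedes it below -/
import Mathlib

section
/- Let A be an abelian group, let α, β ∈ A, and let M, N be two (not necessarily distinct) matchings on [2n]. If the statistic s_{α,β} coincides on T(M,l) and T(N,l) for l = 0 and l = 1, then s_{α,β} coincides on T(M,l) and T(N,l) for every l ≥ 0. -/
/-- Number of crossings of a matching given by its set of edges `(a, b)` with `a < b`:
unordered pairs of edges `e, f` with `min e < min f < max e < max f`. -/
def crStat (s : Finset (ℕ × ℕ)) : ℕ :=
  ((s ×ˢ s).filter fun p => p.1.1 < p.2.1 ∧ p.2.1 < p.1.2 ∧ p.1.2 < p.2.2).card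

/-- Number of nestings: unordered pairs of edges `e, f` with `min e < min f < max f < max e`. -/
def neStat (s : Finset (ℕ × ℕ)) : ℕ :=
  ((s ×ˢ s).filter fun p => p.1.1 < p.2.1 ∧ p.2.2 < p.1.2).card

/-- Number of camels (separated pairs): unordered pairs of edges `e, f` with `max e < min f`. -/
def caStat (s : Finset (ℕ × ℕ)) : ℕ :=
  ((s ×ˢ s).filter fun p => p.1.2 < p.2.1).card

/-- `s` is the edge set of a matching on `[2n] = {1, …, 2n}`: `n` edges `(a, b)` with
`a < b`, and every vertex of `[2n]` belongs to exactly one edge. -/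
def IsMatching (n : ℕ) (s : Finset (ℕ × ℕ)) : Prop :=
  s.card = n ∧
  (∀ e ∈ s, e.1 < e.2 ∧ 1 ≤ e.1 ∧ e.2 ≤ 2 * n) ∧
  (∀ v : ℕ, 1 ≤ v → v ≤ 2 * n → ∃! e, e ∈ s ∧ (v = e.1 ∨ v = e.2))

/-- The order isomorphism `[2n] → {2, …, 2n+2} \ {x}`. -/
def shiftV (x v : ℕ) : ℕ := if v + 1 < x then v + 1 else v + 2

/-- The matching on `[2n+2]` obtained from a matching on `[2n]` by relabeling its vertices
order-isomorphically as `{2, …, 2n+2} \ {x}` and adding the new first edge `{1, x}`. -/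
def addFirst (x : ℕ) (s : Finset (ℕ × ℕ)) : Finset (ℕ × ℕ) :=
  insert (1, x) (s.image fun e => (shiftV x e.1, shiftV x e.2))

/-- All matchings obtained from `s` by adding a new first edge in all possible ways. -/
def childrenM (s : Finset (ℕ × ℕ)) : Multiset (Finset (ℕ × ℕ)) :=
  (Finset.Icc 2 (2 * s.card + 2)).val.map fun x => addFirst x s

/-- `levelM s l` is the multiset `T(s, l)` of matchings obtained from `s` by `l` successive
additions of a new first edge in all possible ways. -/
def levelM (s : Finset (ℕ × ℕ)) : ℕ → Multiset (Finset (ℕ × ℕ))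
  | 0 => {s}
  | l + 1 => (levelM s l).bind childrenM

open Finset

section Tri
variable {M : Type*} [AddCommMonoid M]
lemma sum_triangle_comm' (n : ℕ) (f : ℕ → ℕ → M) :
    ∑ r ∈ range (n+1), ∑ m ∈ range (r+1), f r m
      = ∑ m ∈ range (n+1), ∑ r ∈ Finset.Icc m n, f r m := by
  rw [Finset.sum_sigma', Finset.sum_sigma']
  apply Finset.sum_nbij' (i := fun p => ⟨p.2, p.1⟩) (j := fun p => ⟨p.2, p.1⟩) <;>
    simp only [Finset.mem_sigma, Finset.mem_range, Finset.mem_Icc] <;>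
    intros <;> first | omega | rfl | trivial

lemma sum_triangle_comm (n : ℕ) (f : ℕ → ℕ → M) :
    ∑ c ∈ range (n+1), ∑ d ∈ range (n+1-c), f c d
      = ∑ d ∈ range (n+1), ∑ c ∈ range (n+1-d), f c d := by
  rw [Finset.sum_sigma', Finset.sum_sigma']
  apply Finset.sum_nbij' (i := fun p => ⟨p.2, p.1⟩) (j := fun p => ⟨p.2, p.1⟩) <;>
    simp only [Finset.mem_sigma, Finset.mem_range] <;> intros <;> first | omega | rfl | trivial
end Tri

section Alg
variable {A : Type*} [AddCommGroup A]
abbrev Rg (A : Type*) [AddCommGroup A] : Type _ := AddMonoidAlgebra ℕ A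
noncomputable def eps (a : A) : Rg A := AddMonoidAlgebra.single a 1
lemma eps_mul (a b : A) : eps a * eps b = eps (a + b) := by
  simp [eps, AddMonoidAlgebra.single_mul_single]
lemma eps_zero : (eps (0:A)) = 1 := rfl
lemma eps_pow (a : A) (n : ℕ) : (eps a) ^ n = eps (n • a) := by
  induction n with
  | zero => simp [eps_zero]
  | succ n ih => rw [pow_succ, ih, eps_mul, succ_nsmul]

noncomputable def toR (m : Multiset A) : Rg A := (m.map eps).sum

@[simp] lemma toR_zero : toR (0 : Multiset A) = 0 := rfl

@[simp] lemma toR_cons (a : A) (m : Multiset A) : toR (a ::ₘ m) = eps a + toR m := by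
  simp [toR]

@[simp] lemma toR_singleton (a : A) : toR ({a} : Multiset A) = eps a := by
  simp [toR]

lemma toR_add (m n : Multiset A) : toR (m + n) = toR m + toR n := by
  simp [toR]

lemma toR_bind {ι : Type*} (m : Multiset ι) (f : ι → Multiset A) :
    toR (m.bind f) = (m.map (fun a => toR (f a))).sum := by
  induction m using Multiset.induction with
  | empty => simp
  | cons a m ih => simp [Multiset.cons_bind, toR_add, ih]

lemma toR_apply (m : Multiset A) (a : A) [DecidableEq A] : (toR m).coeff a = m.count a := by
  induction m using Multiset.induction with
  | empty => simp [toR]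
  | cons b m ih =>
      rw [toR_cons, AddMonoidAlgebra.coeff_add, Finsupp.add_apply, ih]
      simp [eps, AddMonoidAlgebra.coeff_single, Finsupp.single_apply, Multiset.count_cons, eq_comm]
      omega

lemma toR_map_add (c : A) (m : Multiset A) :
    toR (m.map (fun a => c + a)) = eps c * toR m := by
  induction m using Multiset.induction with
  | empty => simp
  | cons a m ih =>
      rw [Multiset.map_cons, toR_cons, toR_cons, ih, mul_add, eps_mul]

lemma toR_coe_list (l : List A) :
    toR (↑l : Multiset A) = ∑ j ∈ Finset.range l.length, eps (l.getD j 0) := by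
  induction l with
  | nil => simp [toR]
  | cons a t ih =>
      have hc : toR (↑(a :: t) : Multiset A) = eps a + toR (↑t : Multiset A) := toR_cons a ↑t
      rw [hc, List.length_cons, Finset.sum_range_succ']
      simp only [List.getD_cons_succ, List.getD_cons_zero]
      rw [ih, add_comm]

lemma toR_injective : Function.Injective (toR (A := A)) := by
  classical
  intro m n h
  ext a
  have := congrArg (fun f : Rg A => f.coeff a) h
  simpa [toR_apply] using this

noncomputable def hsym : ℕ → List A → Rg A
  | r, [] => if r = 0 then 1 else 0
  | r, z :: t => ∑ c ∈ range (r+1), (eps z) ^ c * hsym (r-c) t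

lemma hsym_nil (r : ℕ) : hsym (A := A) r [] = if r = 0 then 1 else 0 := by rfl

lemma hsym_cons (r : ℕ) (z : A) (t : List A) :
    hsym r (z :: t) = ∑ c ∈ range (r+1), (eps z) ^ c * hsym (r-c) t := by rfl

lemma hsym_swap (r : ℕ) (a b : A) (t : List A) :
    hsym r (a :: b :: t) = hsym r (b :: a :: t) := by
  have key : ∀ x y : A, hsym r (x :: y :: t)
      = ∑ c ∈ range (r+1), ∑ d ∈ range (r+1-c),
          (eps x) ^ c * ((eps y) ^ d * hsym (r-c-d) t) := by
    intro x y
    rw [hsym_cons]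
    refine Finset.sum_congr rfl fun c hc => ?_
    simp only [mem_range] at hc
    rw [hsym_cons, Finset.mul_sum]
    have : r - c + 1 = r + 1 - c := by omega
    rw [this]
  rw [key, key, sum_triangle_comm]
  refine Finset.sum_congr rfl fun d hd => Finset.sum_congr rfl fun c hc => ?_
  have : r - c - d = r - d - c := by omega
  rw [this]
  ring

lemma hsym_perm : ∀ r : ℕ, ∀ {u v : List A}, u.Perm v → hsym r u = hsym r v := by
  intro r
  induction r using Nat.strong_induction_on with
  | _ r ihr =>
    intro u v h
    induction h with
    | nil => rfl
    | cons x h ih =>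
        rw [hsym_cons, hsym_cons]
        refine Finset.sum_congr rfl fun c hc => ?_
        simp only [mem_range] at hc
        by_cases hc0 : c = 0
        · subst hc0; simp only [Nat.sub_zero]; rw [ih]
        · congr 1
          exact ihr (r - c) (by omega) h
    | swap a b t => exact hsym_swap r b a t
    | trans h₁ h₂ ih₁ ih₂ => rw [ih₁, ih₂]

lemma hsym_map_add (γ : A) : ∀ (t : List A) (r : ℕ),
    hsym r (t.map (fun a => γ + a)) = (eps γ) ^ r * hsym r t := by
  intro t
  induction t with
  | nil => intro r; cases r <;> simp [hsym_nil]
  | cons z t ih =>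
      intro r
      rw [List.map_cons, hsym_cons, hsym_cons, Finset.mul_sum]
      refine Finset.sum_congr rfl fun c hc => ?_
      simp only [mem_range] at hc
      rw [ih, ← eps_mul, mul_pow]
      have h2 : (eps γ) ^ r = (eps γ) ^ c * (eps γ) ^ (r - c) := by
        rw [← pow_add]; congr 1; omega
      rw [h2]; ring

section Geo
variable (α β : A)

noncomputable def geo (m : ℕ) : Rg A := ∑ c ∈ range m, (eps α) ^ c * (eps β) ^ (m-1-c)

@[simp] lemma geo_zero : geo α β 0 = 0 := by simp [geo]

lemma geo_split {m n : ℕ} (h : m ≤ n) :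
    (eps β) ^ m * geo α β (n-m) + (eps α) ^ (n-m) * geo α β m = geo α β n := by
  obtain ⟨k, rfl⟩ : ∃ k, n = k + m := ⟨n - m, by omega⟩
  have hk : k + m - m = k := by omega
  rw [hk]
  conv_rhs => rw [geo, Finset.sum_range_add]
  congr 1
  · rw [geo, Finset.mul_sum]
    refine Finset.sum_congr rfl fun c hc => ?_
    simp only [mem_range] at hc
    have h1 : k + m - 1 - c = m + (k - 1 - c) := by omega
    rw [h1, pow_add]
    ring
  · rw [geo, Finset.mul_sum]
    refine Finset.sum_congr rfl fun c hc => ?_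
    simp only [mem_range] at hc
    have h1 : k + m - 1 - (k + c) = m - 1 - c := by omega
    rw [h1, pow_add]
    ring


lemma lemA : ∀ (u : List A) (e : ℕ),
    (∑ j ∈ range u.length,
      eps (u.getD j 0) * hsym e ((u.take (j+1)).map (fun a => α + a)
          ++ (u.drop j).map (fun a => β + a)))
    = geo α β (e+1) * hsym (e+1) u := by
  intro u
  induction u with
  | nil => intro e; simp [hsym_nil]
  | cons z t ih =>
    intro e
    have hlen : (z :: t).length = t.length + 1 := rfl
    rw [hlen, Finset.sum_range_succ']
    -- the j = 0 term
    have hterm0 : eps ((z :: t).getD 0 0) * hsym e (((z :: t).take (0+1)).map (fun a => α + a)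
          ++ ((z :: t).drop 0).map (fun a => β + a))
        = ∑ i ∈ range (e+2), (eps z)^i *
            (((eps β)^(e+1-i) * geo α β i) * hsym (e+1-i) t) := by
      have hl : ((z :: t).take (0+1)).map (fun a => α + a)
          ++ ((z :: t).drop 0).map (fun a => β + a)
            = (α + z) :: (β + z) :: t.map (fun a => β + a) := by
        simp
      rw [hl, List.getD_cons_zero, hsym_cons, Finset.mul_sum]
      have hinner : ∀ c ∈ range (e+1),
          eps z * ((eps (α + z))^c * hsym (e-c) ((β + z) :: t.map (fun a => β + a)))
          = ∑ d ∈ range (e+1-c), eps z * ((eps (α+z))^c * ((eps (β+z))^d *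
              ((eps β)^(e-c-d) * hsym (e-c-d) t))) := by
        intro c hc
        simp only [mem_range] at hc
        rw [hsym_cons, Finset.mul_sum, Finset.mul_sum]
        have : e - c + 1 = e + 1 - c := by omega
        rw [this]
        refine Finset.sum_congr rfl fun d hd => ?_
        rw [hsym_map_add]
      rw [Finset.sum_congr rfl hinner]
      -- now a sigma reindexing
      rw [Finset.sum_sigma']
      have hrhs : ∀ i ∈ range (e+2), (eps z)^i *
            (((eps β)^(e+1-i) * geo α β i) * hsym (e+1-i) t)
          = ∑ c ∈ range i, (eps z)^i * (((eps β)^(e+1-i) *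
              ((eps α)^c * (eps β)^(i-1-c))) * hsym (e+1-i) t) := by
        intro i hi
        rw [geo, Finset.mul_sum, Finset.sum_mul, Finset.mul_sum]
      rw [Finset.sum_congr rfl hrhs, Finset.sum_sigma']
      apply Finset.sum_nbij' (i := fun p => (⟨p.1 + p.2 + 1, p.1⟩ : (_ : ℕ) × ℕ))
        (j := fun p => (⟨p.2, p.1 - 1 - p.2⟩ : (_ : ℕ) × ℕ))
      · simp only [Finset.mem_sigma, Finset.mem_range]; intro p hp; omega
      · simp only [Finset.mem_sigma, Finset.mem_range]; intro p hp; omega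
      · simp only [Finset.mem_sigma, Finset.mem_range]; intro p hp
        ext <;> simp <;> omega
      · simp only [Finset.mem_sigma, Finset.mem_range]; intro p hp
        ext <;> simp <;> omega
      · simp only [Finset.mem_sigma, Finset.mem_range]
        intro ⟨c, d⟩ hp
        simp only
        have h1 : e + 1 - (c + d + 1) = e - c - d := by omega
        have h2 : c + d + 1 - 1 - c = d := by omega
        rw [h1, h2, ← eps_mul, mul_pow, ← eps_mul, mul_pow]
        have h3 : (eps z)^(c+d+1) = (eps z)^c * (eps z)^d * eps z := by
          rw [← pow_add, ← pow_succ]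
        rw [h3]
        ring
    rw [hterm0]
    -- the j = i+1 terms
    have hmain : (∑ i ∈ range t.length, eps ((z :: t).getD (i+1) 0) *
          hsym e (((z :: t).take (i+1+1)).map (fun a => α + a)
            ++ ((z :: t).drop (i+1)).map (fun a => β + a)))
        = ∑ c ∈ range (e+2), (eps z)^c *
            (((eps α)^c * geo α β (e+1-c)) * hsym (e+1-c) t) := by
      have hl : ∀ i, ((z :: t).take (i+1+1)).map (fun a => α + a)
            ++ ((z :: t).drop (i+1)).map (fun a => β + a)
          = (α + z) :: ((t.take (i+1)).map (fun a => α + a)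
              ++ (t.drop i).map (fun a => β + a)) := by
        intro i
        simp
      have hstep : ∀ i ∈ range t.length, eps ((z :: t).getD (i+1) 0) *
          hsym e (((z :: t).take (i+1+1)).map (fun a => α + a)
            ++ ((z :: t).drop (i+1)).map (fun a => β + a))
          = ∑ c ∈ range (e+1), (eps (α+z))^c *
              (eps (t.getD i 0) * hsym (e-c) ((t.take (i+1)).map (fun a => α + a)
                ++ (t.drop i).map (fun a => β + a))) := by
        intro i hi
        rw [hl i, List.getD_cons_succ, hsym_cons, Finset.mul_sum]
        refine Finset.sum_congr rfl fun c hc => ?_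
        ring
      rw [Finset.sum_congr rfl hstep, Finset.sum_comm]
      have hc2 : ∀ c ∈ range (e+1), (∑ i ∈ range t.length, (eps (α+z))^c *
              (eps (t.getD i 0) * hsym (e-c) ((t.take (i+1)).map (fun a => α + a)
                ++ (t.drop i).map (fun a => β + a))))
          = (eps z)^c * (((eps α)^c * geo α β (e+1-c)) * hsym (e+1-c) t) := by
        intro c hc
        simp only [mem_range] at hc
        rw [← Finset.mul_sum, ih (e - c)]
        have : e - c + 1 = e + 1 - c := by omega
        rw [this, ← eps_mul, mul_pow]
        ring
      rw [Finset.sum_congr rfl hc2]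
      conv_rhs => rw [Finset.sum_range_succ]
      have h0 : e + 1 - (e + 1) = 0 := by omega
      rw [h0, geo_zero]
      simp
    rw [hmain, ← Finset.sum_add_distrib]
    -- assemble via geo_split
    rw [hsym_cons, Finset.mul_sum]
    refine Finset.sum_congr rfl fun i hi => ?_
    simp only [mem_range] at hi
    have hsplit := geo_split α β (m := e + 1 - i) (n := e + 1) (by omega)
    have h1 : e + 1 - (e + 1 - i) = i := by omega
    rw [h1] at hsplit
    rw [← hsplit]
    ring


/-- The child weight sequence: inserting the new closer after position `j`. -/
def cseq0 (u : List A) (j : ℕ) : List A :=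
  0 :: ((u.take (j+1)).map (fun a => α + a) ++ (u.drop j).map (fun a => β + a))

noncomputable def Phi : ℕ → List A → Rg A
  | 0, _ => 1
  | (l+1), u => ∑ j ∈ range u.length, eps (u.getD j 0) * Phi l (cseq0 α β u j)

@[simp] lemma Phi_zero (u : List A) : Phi α β 0 u = 1 := rfl

lemma Phi_succ (l : ℕ) (u : List A) :
    Phi α β (l+1) u = ∑ j ∈ range u.length, eps (u.getD j 0) * Phi α β l (cseq0 α β u j) := rfl

lemma hsym_zero (u : List A) : hsym 0 u = 1 := by
  induction u with
  | nil => rfl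
  | cons z t ih => rw [hsym_cons]; simp [ih]

lemma hsym_cons_zero (r : ℕ) (w : List A) :
    hsym r ((0:A) :: w) = ∑ c ∈ range (r+1), hsym c w := by
  rw [hsym_cons]
  rw [← Finset.sum_range_reflect]
  refine Finset.sum_congr rfl fun c hc => ?_
  simp only [mem_range] at hc
  rw [eps_zero, one_pow, one_mul]
  congr 1
  omega

lemma phi_closed : ∀ l : ℕ, ∃ coef : ℕ → Rg A, ∀ u : List A,
    Phi α β l u = ∑ r ∈ range (l+1), coef r * hsym r u := by
  intro l
  induction l with
  | zero =>
      refine ⟨fun r => if r = 0 then 1 else 0, fun u => ?_⟩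
      simp [hsym_zero]
  | succ l ihl =>
      obtain ⟨coef, hc⟩ := ihl
      refine ⟨fun r' => match r' with
        | 0 => 0
        | m+1 => (∑ r ∈ Finset.Icc m l, coef r) * geo α β (m+1), fun u => ?_⟩
      rw [Phi_succ]
      have h1 : ∀ j ∈ range u.length, eps (u.getD j 0) * Phi α β l (cseq0 α β u j)
          = ∑ r ∈ range (l+1), coef r * (eps (u.getD j 0) * hsym r (cseq0 α β u j)) := by
        intro j hj
        rw [hc, Finset.mul_sum]
        refine Finset.sum_congr rfl fun r hr => ?_
        ring
      rw [Finset.sum_congr rfl h1, Finset.sum_comm]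
      have h2 : ∀ r ∈ range (l+1),
          (∑ j ∈ range u.length, coef r * (eps (u.getD j 0) * hsym r (cseq0 α β u j)))
          = ∑ m ∈ range (r+1), coef r * (geo α β (m+1) * hsym (m+1) u) := by
        intro r hr
        rw [← Finset.mul_sum]
        have h3 : (∑ j ∈ range u.length, eps (u.getD j 0) * hsym r (cseq0 α β u j))
            = ∑ m ∈ range (r+1), geo α β (m+1) * hsym (m+1) u := by
          have h4 : ∀ j ∈ range u.length, eps (u.getD j 0) * hsym r (cseq0 α β u j)
              = ∑ c ∈ range (r+1), eps (u.getD j 0) * hsym c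
                  ((u.take (j+1)).map (fun a => α + a) ++ (u.drop j).map (fun a => β + a)) := by
            intro j hj
            rw [cseq0, hsym_cons_zero, Finset.mul_sum]
          rw [Finset.sum_congr rfl h4, Finset.sum_comm]
          refine Finset.sum_congr rfl fun m hm => ?_
          exact lemA α β u m
        rw [h3, Finset.mul_sum]
      rw [Finset.sum_congr rfl h2, sum_triangle_comm' l
        (fun r m => coef r * (geo α β (m+1) * hsym (m+1) u))]
      conv_rhs => rw [Finset.sum_range_succ']
      simp only [zero_mul, add_zero]
      refine Finset.sum_congr rfl fun m hm => ?_
      rw [Finset.sum_mul, Finset.sum_mul]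
      exact Finset.sum_congr rfl fun r hr => by ring

lemma Phi_perm {u v : List A} (h : u.Perm v) (l : ℕ) : Phi α β l u = Phi α β l v := by
  obtain ⟨coef, hc⟩ := phi_closed α β l
  rw [hc, hc]
  exact Finset.sum_congr rfl fun r _ => by rw [hsym_perm r h]

end Geo
end Alg

section Conc

def PosK (K : Finset (ℕ × ℕ)) : Prop := ∀ f ∈ K, 1 ≤ f.1
def hNf (K : Finset (ℕ × ℕ)) (j : ℕ) : ℕ := (K.filter fun f => f.1 ≤ j ∧ j < f.2).card
def bNf (K : Finset (ℕ × ℕ)) (j : ℕ) : ℕ := (K.filter fun f => f.2 ≤ j).card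

lemma shiftV_pos (x v : ℕ) : 1 ≤ shiftV x v := by unfold shiftV; split <;> omega

lemma phi_inj (x : ℕ) : Function.Injective (fun e : ℕ × ℕ => (shiftV x e.1, shiftV x e.2)) := by
  intro e f h
  simp only [Prod.mk.injEq] at h
  have h1 := h.1; have h2 := h.2
  unfold shiftV at h1 h2
  ext
  · split at h1 <;> split at h1 <;> omega
  · split at h2 <;> split at h2 <;> omega

lemma not_mem_image_addFirst {K : Finset (ℕ × ℕ)} (hpos : PosK K) (x : ℕ) :
    (1, x) ∉ K.image fun e => (shiftV x e.1, shiftV x e.2) := by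
  intro h
  obtain ⟨f, hf, hf2⟩ := Finset.mem_image.mp h
  have := hpos f hf
  simp only [Prod.mk.injEq] at hf2
  have h1 := hf2.1
  unfold shiftV at h1
  split at h1 <;> omega

lemma card_addFirst {K : Finset (ℕ × ℕ)} (hpos : PosK K) (x : ℕ) :
    (addFirst x K).card = K.card + 1 := by
  rw [addFirst, Finset.card_insert_of_notMem (not_mem_image_addFirst hpos x),
    Finset.card_image_of_injective _ (phi_inj x)]

lemma posK_addFirst (x : ℕ) (K : Finset (ℕ × ℕ)) : PosK (addFirst x K) := by
  intro f hf
  rw [addFirst, Finset.mem_insert] at hf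
  rcases hf with rfl | hf
  · exact le_refl 1
  · obtain ⟨g, hg, rfl⟩ := Finset.mem_image.mp hf
    exact shiftV_pos x g.1

lemma card_filter_prod_insert (a : ℕ × ℕ) (P : Finset (ℕ × ℕ)) (ha : a ∉ P)
    (pred : (ℕ × ℕ) × (ℕ × ℕ) → Prop) [DecidablePred pred]
    (haa : ¬ pred (a, a)) (h2 : ∀ f ∈ P, ¬ pred (f, a)) :
    (((insert a P) ×ˢ (insert a P)).filter pred).card
      = (P.filter fun f => pred (a, f)).card + ((P ×ˢ P).filter pred).card := by
  have hset : ((insert a P) ×ˢ (insert a P)).filter pred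
      = ((P.filter fun f => pred (a, f)).image fun f => (a, f)) ∪ (P ×ˢ P).filter pred := by
    ext ⟨u, v⟩
    simp only [Finset.mem_filter, Finset.mem_product, Finset.mem_insert, Finset.mem_union,
      Finset.mem_image, Prod.mk.injEq]
    constructor
    · rintro ⟨⟨hu | hu, hv | hv⟩, hp⟩
      · subst hu; subst hv; exact absurd hp haa
      · subst hu; exact Or.inl ⟨v, ⟨hv, hp⟩, rfl, rfl⟩
      · subst hv; exact absurd hp (h2 u hu)
      · exact Or.inr ⟨⟨hu, hv⟩, hp⟩
    · rintro (⟨f, ⟨hf, hpf⟩, rfl, rfl⟩ | ⟨⟨hu, hv⟩, hp⟩)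
      · exact ⟨⟨Or.inl rfl, Or.inr hf⟩, hpf⟩
      · exact ⟨⟨Or.inr hu, Or.inr hv⟩, hp⟩
  rw [hset, Finset.card_union_of_disjoint, Finset.card_image_of_injective]
  · intro u v huv; simpa using huv
  · rw [Finset.disjoint_left]
    rintro ⟨u, v⟩ hu hv
    simp only [Finset.mem_image] at hu
    obtain ⟨f, _, heq⟩ := hu
    simp only [Finset.mem_filter, Finset.mem_product] at hv
    injection heq with e1 e2
    subst e1
    exact ha hv.1.1

lemma card_filter_image {K : Finset (ℕ × ℕ)} {φ : ℕ × ℕ → ℕ × ℕ}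
    (hinj : Function.Injective φ) (q : ℕ × ℕ → Prop) [DecidablePred q] :
    ((K.image φ).filter q).card = (K.filter fun f => q (φ f)).card := by
  rw [Finset.filter_image, Finset.card_image_of_injective _ hinj]

lemma card_filter_prod_image {K : Finset (ℕ × ℕ)} {φ : ℕ × ℕ → ℕ × ℕ}
    (hinj : Function.Injective φ)
    (pred : (ℕ × ℕ) × (ℕ × ℕ) → Prop) [DecidablePred pred] :
    ((K.image φ ×ˢ K.image φ).filter pred).card
      = ((K ×ˢ K).filter fun pr => pred (φ pr.1, φ pr.2)).card := by
  have himg : K.image φ ×ˢ K.image φ = (K ×ˢ K).image fun pr => (φ pr.1, φ pr.2) := by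
    ext ⟨u, v⟩
    constructor
    · intro h
      rw [Finset.mem_product] at h
      obtain ⟨hu, hv⟩ := h
      obtain ⟨f, hf, rfl⟩ := Finset.mem_image.mp hu
      obtain ⟨g, hg, rfl⟩ := Finset.mem_image.mp hv
      exact Finset.mem_image.mpr ⟨(f, g), Finset.mem_product.mpr ⟨hf, hg⟩, rfl⟩
    · intro h
      obtain ⟨pr, hpr, heq⟩ := Finset.mem_image.mp h
      rw [Finset.mem_product] at hpr
      rw [Finset.mem_product, ← heq]
      exact ⟨Finset.mem_image.mpr ⟨pr.1, hpr.1, rfl⟩, Finset.mem_image.mpr ⟨pr.2, hpr.2, rfl⟩⟩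
  have hinj2 : Function.Injective fun pr : (ℕ × ℕ) × (ℕ × ℕ) => (φ pr.1, φ pr.2) := by
    intro u v huv
    simp only [Prod.mk.injEq] at huv
    exact Prod.ext (hinj huv.1) (hinj huv.2)
  rw [himg, Finset.filter_image, Finset.card_image_of_injective _ hinj2]

lemma crStat_addFirst {K : Finset (ℕ × ℕ)} (hpos : PosK K) {x : ℕ} (hx : 2 ≤ x) :
    crStat (addFirst x K) = crStat K + hNf K (x - 2) := by
  have key := card_filter_prod_insert (1, x) (K.image fun e => (shiftV x e.1, shiftV x e.2))
      (not_mem_image_addFirst hpos x)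
      (fun p : (ℕ × ℕ) × (ℕ × ℕ) => p.1.1 < p.2.1 ∧ p.2.1 < p.1.2 ∧ p.1.2 < p.2.2)
      (by simp) ?side
  case side =>
    rintro ⟨a, b⟩ hf hcon
    obtain ⟨⟨g1, g2⟩, hg, heq⟩ := Finset.mem_image.mp hf
    injection heq with e1 e2
    subst e1
    have := shiftV_pos x g1
    obtain ⟨h1, -⟩ := hcon
    simp only at h1
    omega
  rw [crStat, addFirst, key, card_filter_image (phi_inj x), card_filter_prod_image (phi_inj x),
    add_comm]
  congr 1
  · rw [crStat]
    congr 1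
    apply Finset.filter_congr
    rintro ⟨⟨a, b⟩, ⟨c, d⟩⟩ hm
    simp only [shiftV]
    constructor
    · rintro ⟨h1, h2, h3⟩
      split_ifs at h1 h2 h3 <;> omega
    · rintro ⟨h1, h2, h3⟩
      refine ⟨?_, ?_, ?_⟩ <;> split_ifs <;> omega
  · rw [hNf]
    congr 1
    apply Finset.filter_congr
    rintro ⟨a, b⟩ hm
    have hpa : 1 ≤ a := hpos _ hm
    simp only [shiftV]
    constructor
    · rintro ⟨h1, h2, h3⟩
      split_ifs at h2 h3 <;> omega
    · rintro ⟨h1, h2⟩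
      refine ⟨?_, ?_, ?_⟩ <;> split_ifs <;> omega

lemma neStat_addFirst {K : Finset (ℕ × ℕ)} (hpos : PosK K) {x : ℕ} (hx : 2 ≤ x) :
    neStat (addFirst x K) = neStat K + bNf K (x - 2) := by
  have key := card_filter_prod_insert (1, x) (K.image fun e => (shiftV x e.1, shiftV x e.2))
      (not_mem_image_addFirst hpos x)
      (fun p : (ℕ × ℕ) × (ℕ × ℕ) => p.1.1 < p.2.1 ∧ p.2.2 < p.1.2)
      (by simp) ?side
  case side =>
    rintro ⟨a, b⟩ hf hcon
    obtain ⟨⟨g1, g2⟩, hg, heq⟩ := Finset.mem_image.mp hf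
    injection heq with e1 e2
    subst e1
    have := shiftV_pos x g1
    obtain ⟨h1, -⟩ := hcon
    simp only at h1
    omega
  rw [neStat, addFirst, key, card_filter_image (phi_inj x), card_filter_prod_image (phi_inj x),
    add_comm]
  congr 1
  · rw [neStat]
    congr 1
    apply Finset.filter_congr
    rintro ⟨⟨a, b⟩, ⟨c, d⟩⟩ hm
    simp only [shiftV]
    constructor
    · rintro ⟨h1, h2⟩
      split_ifs at h1 h2 <;> omega
    · rintro ⟨h1, h2⟩
      refine ⟨?_, ?_⟩ <;> split_ifs <;> omega
  · rw [bNf]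
    congr 1
    apply Finset.filter_congr
    rintro ⟨a, b⟩ hm
    have hpa : 1 ≤ a := hpos _ hm
    simp only [shiftV]
    constructor
    · rintro ⟨h1, h2⟩
      split_ifs at h2 <;> omega
    · rintro h1
      refine ⟨?_, ?_⟩ <;> split_ifs <;> omega


lemma hNf_addFirst_zero (x : ℕ) (K : Finset (ℕ × ℕ)) : hNf (addFirst x K) 0 = 0 := by
  rw [hNf, Finset.card_eq_zero, Finset.filter_eq_empty_iff]
  intro f hf
  have := posK_addFirst x K f hf
  omega

lemma bNf_addFirst_zero {x : ℕ} (hx : 2 ≤ x) (K : Finset (ℕ × ℕ)) : bNf (addFirst x K) 0 = 0 := by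
  rw [bNf, Finset.card_eq_zero, Finset.filter_eq_empty_iff]
  intro f hf
  rw [addFirst, Finset.mem_insert] at hf
  rcases hf with rfl | hf
  · simp only
    omega
  · obtain ⟨g, hg, rfl⟩ := Finset.mem_image.mp hf
    have := shiftV_pos x g.2
    simp only
    omega

lemma hNf_addFirst_lo {K : Finset (ℕ × ℕ)} (hpos : PosK K) {x j : ℕ} (hx : 2 ≤ x)
    (h1 : 1 ≤ j) (h2 : j < x) : hNf (addFirst x K) j = hNf K (j - 1) + 1 := by
  rw [hNf, addFirst, Finset.filter_insert, if_pos (by simp only; omega),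
    Finset.card_insert_of_notMem, Finset.filter_image,
    Finset.card_image_of_injective _ (phi_inj x), hNf]
  · congr 1
    congr 1
    apply Finset.filter_congr
    rintro ⟨a, b⟩ hm
    simp only [shiftV]
    constructor
    · rintro ⟨ha, hb⟩
      split_ifs at ha hb <;> omega
    · rintro ⟨ha, hb⟩
      constructor <;> split_ifs <;> omega
  · intro hmem
    exact not_mem_image_addFirst hpos x (Finset.mem_of_mem_filter _ hmem)

lemma bNf_addFirst_lo {K : Finset (ℕ × ℕ)} {x j : ℕ} (h1 : 1 ≤ j) (h2 : j < x) :
    bNf (addFirst x K) j = bNf K (j - 1) := by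
  rw [bNf, addFirst, Finset.filter_insert, if_neg (by simp only; omega),
    Finset.filter_image, Finset.card_image_of_injective _ (phi_inj x), bNf]
  congr 1
  apply Finset.filter_congr
  rintro ⟨a, b⟩ hm
  simp only [shiftV]
  split_ifs <;> omega

lemma hNf_addFirst_hi {K : Finset (ℕ × ℕ)} {x j : ℕ} (hx : 2 ≤ x) (h2 : x ≤ j) :
    hNf (addFirst x K) j = hNf K (j - 2) := by
  rw [hNf, addFirst, Finset.filter_insert, if_neg (by simp only; omega),
    Finset.filter_image, Finset.card_image_of_injective _ (phi_inj x), hNf]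
  congr 1
  apply Finset.filter_congr
  rintro ⟨a, b⟩ hm
  simp only [shiftV]
  constructor
  · rintro ⟨ha, hb⟩
    split_ifs at ha hb <;> omega
  · rintro ⟨ha, hb⟩
    constructor <;> split_ifs <;> omega

lemma bNf_addFirst_hi {K : Finset (ℕ × ℕ)} (hpos : PosK K) {x j : ℕ} (hx : 2 ≤ x) (h2 : x ≤ j) :
    bNf (addFirst x K) j = bNf K (j - 2) + 1 := by
  rw [bNf, addFirst, Finset.filter_insert, if_pos (by simp only; omega),
    Finset.card_insert_of_notMem, Finset.filter_image,
    Finset.card_image_of_injective _ (phi_inj x), bNf]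
  · congr 1
    congr 1
    apply Finset.filter_congr
    rintro ⟨a, b⟩ hm
    simp only [shiftV]
    split_ifs <;> omega
  · intro hmem
    exact not_mem_image_addFirst hpos x (Finset.mem_of_mem_filter _ hmem)


section Stat
variable {A : Type*} [AddCommGroup A] (α β : A)

def wfK (K : Finset (ℕ × ℕ)) (j : ℕ) : A := hNf K j • α + bNf K j • β

def wseqf (K : Finset (ℕ × ℕ)) : List A := (List.range (2 * K.card + 1)).map (wfK α β K)

def statf (K : Finset (ℕ × ℕ)) : A := crStat K • α + neStat K • β

lemma statf_addFirst {K : Finset (ℕ × ℕ)} (hpos : PosK K) {x : ℕ} (hx : 2 ≤ x) :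
    statf α β (addFirst x K) = statf α β K + wfK α β K (x - 2) := by
  rw [statf, statf, wfK, crStat_addFirst hpos hx, neStat_addFirst hpos hx, add_nsmul, add_nsmul]
  abel

lemma wseqf_addFirst {K : Finset (ℕ × ℕ)} (hpos : PosK K) {x : ℕ} (hx : 2 ≤ x)
    (hxu : x ≤ 2 * K.card + 2) :
    wseqf α β (addFirst x K) = cseq0 α β (wseqf α β K) (x - 2) := by
  have hlw : (wseqf α β K).length = 2 * K.card + 1 := by
    simp [wseqf]
  have hlt : (List.map (fun a => α + a) (List.take (x - 2 + 1) (wseqf α β K))).length = x - 1 := by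
    simp [hlw]
    omega
  apply List.ext_getElem
  · simp [wseqf, cseq0, card_addFirst hpos, hlw]
    omega
  · intro i h1 h2
    have hiB : i < 2 * K.card + 3 := by
      simp [wseqf, card_addFirst hpos] at h1; omega
    have hL : (wseqf α β (addFirst x K))[i] = wfK α β (addFirst x K) i := by
      simp [wseqf]
    rw [hL]
    rcases Nat.eq_zero_or_pos i with rfl | hipos
    · simp only [cseq0]
      simp only [List.getElem_cons_zero]
      rw [wfK, hNf_addFirst_zero, bNf_addFirst_zero hx]
      simp
    · obtain ⟨i', rfl⟩ : ∃ i', i = i' + 1 := ⟨i - 1, by omega⟩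
      simp only [cseq0]
      simp only [List.getElem_cons_succ]
      rw [List.getElem_append]
      by_cases hcase : i' < x - 1
      · rw [dif_pos (by rw [hlt]; omega)]
        rw [List.getElem_map, List.getElem_take, wfK,
          hNf_addFirst_lo hpos hx (by omega) (by omega),
          bNf_addFirst_lo (by omega) (by omega)]
        have : (wseqf α β K)[i'] = wfK α β K i' := by
          simp [wseqf]
        rw [this, wfK, succ_nsmul]
        have hi1 : i' + 1 - 1 = i' := by omega
        rw [hi1]
        abel
      · rw [dif_neg (by rw [hlt]; omega)]
        rw [List.getElem_map, List.getElem_drop]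
        simp only [hlt]
        have hidx : x - 2 + (i' - (x - 1)) = i' + 1 - 2 := by omega
        simp only [hidx]
        have hval : ∀ (hm : i' + 1 - 2 < (wseqf α β K).length),
            (wseqf α β K)[i' + 1 - 2]'hm = wfK α β K (i' + 1 - 2) := by
          intro hm; simp [wseqf]
        rw [hval]
        rw [wfK, wfK, hNf_addFirst_hi hx (by omega), bNf_addFirst_hi hpos hx (by omega),
          succ_nsmul]
        abel

end Stat

section Bridge
variable {A : Type*} [AddCommGroup A] (α β : A)

lemma levelM_succ' (K : Finset (ℕ × ℕ)) (l : ℕ) :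
    levelM K (l+1) = (childrenM K).bind (fun C => levelM C l) := by
  induction l generalizing K with
  | zero =>
      show (levelM K 0).bind childrenM = _
      rw [show levelM K 0 = {K} from rfl, Multiset.singleton_bind]
      have : (childrenM K).bind (fun C => levelM C 0) = (childrenM K).map id := by
        rw [← Multiset.bind_singleton (f := id)]
        rfl
      rw [this, Multiset.map_id]
  | succ l ih =>
      show (levelM K (l+1)).bind childrenM = _
      rw [ih, Multiset.bind_assoc]
      rfl

lemma length_wseqf (K : Finset (ℕ × ℕ)) : (wseqf α β K).length = 2 * K.card + 1 := by
  simp [wseqf]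

lemma getD_wseqf (K : Finset (ℕ × ℕ)) {j : ℕ} (hj : j < 2 * K.card + 1) :
    (wseqf α β K).getD j 0 = wfK α β K j := by
  rw [List.getD_eq_getElem _ _ (by rw [length_wseqf]; omega)]
  simp [wseqf]

theorem bridge : ∀ (l : ℕ) (K : Finset (ℕ × ℕ)), PosK K →
    toR ((levelM K l).map (statf α β)) = eps (statf α β K) * Phi α β l (wseqf α β K) := by
  intro l
  induction l with
  | zero =>
      intro K hpos
      show toR (({K} : Multiset _).map (statf α β)) = _
      rw [Multiset.map_singleton, toR_singleton, Phi_zero, mul_one]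
  | succ l ih =>
      intro K hpos
      rw [levelM_succ', Multiset.map_bind, toR_bind]
      unfold childrenM
      rw [Multiset.map_map]
      have hsum : ((Finset.Icc 2 (2 * K.card + 2)).val.map
            ((fun C => toR ((levelM C l).map (statf α β))) ∘ (fun x => addFirst x K))).sum
          = ∑ x ∈ Finset.Icc 2 (2 * K.card + 2), toR ((levelM (addFirst x K) l).map (statf α β)) :=
        rfl
      rw [hsum]
      have hstep : ∀ x ∈ Finset.Icc 2 (2 * K.card + 2),
          toR ((levelM (addFirst x K) l).map (statf α β))
            = eps (statf α β K) * (eps (wfK α β K (x - 2)) *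
                Phi α β l (cseq0 α β (wseqf α β K) (x - 2))) := by
        intro x hx
        rw [Finset.mem_Icc] at hx
        rw [ih _ (posK_addFirst x K), statf_addFirst α β hpos hx.1,
          wseqf_addFirst α β hpos hx.1 hx.2, ← eps_mul, mul_assoc]
      rw [Finset.sum_congr rfl hstep, ← Finset.mul_sum]
      congr 1
      have hIcc : Finset.Icc 2 (2 * K.card + 2)
          = (Finset.range (2 * K.card + 1)).map ⟨fun j => j + 2, add_left_injective 2⟩ := by
        ext a
        simp only [Finset.mem_Icc, Finset.mem_map, Finset.mem_range, Function.Embedding.coeFn_mk]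
        constructor
        · intro h; exact ⟨a - 2, by omega, by omega⟩
        · rintro ⟨b, hb, rfl⟩; omega
      rw [hIcc, Finset.sum_map, Phi_succ, length_wseqf]
      refine Finset.sum_congr rfl fun j hj => ?_
      simp only [Finset.mem_range] at hj
      simp only [Function.Embedding.coeFn_mk, Nat.add_sub_cancel]
      rw [getD_wseqf α β K hj]

end Bridge
end Conc



/-- if the statistic `s_{α,β}(K) = cr(K)·α + ne(K)·β` coincides (as a multiset of
values) on `T(M,l)` and `T(N,l)` for `l = 0, 1`, then it coincides for every `l ≥ 0`. -/
theorem sab_coincide_of_first_two_levels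
    {A : Type*} [AddCommGroup A] (α β : A) (n : ℕ)
    (M N : Finset (ℕ × ℕ)) (hM : IsMatching n M) (hN : IsMatching n N)
    (h0 : (levelM M 0).map (fun K => crStat K • α + neStat K • β)
        = (levelM N 0).map (fun K => crStat K • α + neStat K • β))
    (h1 : (levelM M 1).map (fun K => crStat K • α + neStat K • β)
        = (levelM N 1).map (fun K => crStat K • α + neStat K • β)) :
    ∀ l : ℕ, (levelM M l).map (fun K => crStat K • α + neStat K • β)
        = (levelM N l).map (fun K => crStat K • α + neStat K • β) := by
  have hfun : (fun K => crStat K • α + neStat K • β) = statf α β := rfl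
  rw [hfun] at h0 h1 ⊢
  have hposM : PosK M := fun f hf => (hM.2.1 f hf).2.1
  have hposN : PosK N := fun f hf => (hN.2.1 f hf).2.1
  have hcM : M.card = n := hM.1
  have hcN : N.card = n := hN.1
  -- level 0 gives equality of the statistics
  have hstat : statf α β M = statf α β N := by
    have h0' := h0
    simp only [levelM, Multiset.map_singleton] at h0'
    exact Multiset.singleton_inj.mp h0'
  -- compute toR of level 1 via the bridge
  have hlevel1 : ∀ (K : Finset (ℕ × ℕ)), PosK K →
      toR ((levelM K 1).map (statf α β))
        = toR (((wseqf α β K : Multiset A)).map (fun w => statf α β K + w)) := by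
    intro K hpos
    rw [bridge α β 1 K hpos, toR_map_add, toR_coe_list]
    congr 1
    rw [Phi_succ]
    refine Finset.sum_congr rfl fun j hj => ?_
    rw [Phi_zero, mul_one]
  -- deduce the weight sequences are permutations of each other
  have hperm : (wseqf α β M).Perm (wseqf α β N) := by
    rw [← Multiset.coe_eq_coe]
    have hMN : toR (((wseqf α β M : Multiset A)).map (fun w => statf α β M + w))
        = toR (((wseqf α β N : Multiset A)).map (fun w => statf α β N + w)) := by
      rw [← hlevel1 M hposM, ← hlevel1 N hposN, h1]
    have hMN2 := toR_injective hMN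
    rw [hstat] at hMN2
    exact Multiset.map_injective (fun a b h => by
      exact add_left_cancel h) hMN2
  intro l
  apply toR_injective
  rw [bridge α β l M hposM, bridge α β l N hposN, hstat, Phi_perm α β hperm l]
end

section
/- Let A be an abelian group, let α, β ∈ A, and let M, N be two (not necessarily distinct) matchings on [2n]. If the multiset of values of s_{α,β} on T(M,l) equals the multiset of values of s_{β,α} on T(N,l) for l = 0 and l = 1, then these multisets are equal for every l ≥ 0. -/
namespace SAB

lemma mrange_succ' (n : ℕ) : Multiset.range (n+1) = 0 ::ₘ (Multiset.range n).map (1 + ·) := by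
  rw [add_comm n 1, Multiset.range_add]
  simp [Multiset.range_succ, Multiset.singleton_add]

lemma range_map_reflect {β : Type*} (n : ℕ) : ∀ (f : ℕ → β),
    (Multiset.range (n+1)).map f = (Multiset.range (n+1)).map (fun i => f (n - i)) := by
  induction n with
  | zero => intro f; simp
  | succ n ih =>
    intro f
    have h1 : Multiset.range (n+2) = (n+1) ::ₘ Multiset.range (n+1) := Multiset.range_succ (n+1)
    have h2 : Multiset.range (n+2) = 0 ::ₘ (Multiset.range (n+1)).map (1 + ·) := mrange_succ' (n+1)
    conv_lhs => rw [h2]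
    conv_rhs => rw [h1]
    rw [Multiset.map_cons, Multiset.map_cons, Multiset.map_map]
    have h3 : (Multiset.range (n+1)).map (f ∘ (1 + ·)) =
        (Multiset.range (n+1)).map (fun i => f (1 + (n - i))) := ih (fun i => f (1 + i))
    rw [h3]
    congr 1
    · simp
    · apply Multiset.map_congr rfl
      intro i hi
      rw [Multiset.mem_range] at hi
      congr 1
      omega

def diagM (n : ℕ) : Multiset (ℕ × ℕ) := (Multiset.range (n+1)).map fun u => (u, n - u)

def T1 (w : ℕ) : Multiset (ℕ × ℕ) :=
  (Multiset.range (w+1)).bind fun u => (Multiset.range (w+1-u)).map fun v => (u, v)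

def T2 (w : ℕ) : Multiset (ℕ × ℕ) :=
  (Multiset.range (w+1)).bind fun r => (Multiset.range (r+1)).map fun u => (u, r - u)

lemma T1_zero : T1 0 = {(0,0)} := by
  simp [T1, Multiset.range_succ]

lemma T2_zero : T2 0 = {(0,0)} := by
  simp [T2, Multiset.range_succ]

lemma T1_succ (w : ℕ) : T1 (w+1) = diagM (w+1) + T1 w := by
  have step : T1 (w+1) = (Multiset.range (w+2)).bind
      (fun u => (u, w+1-u) ::ₘ (Multiset.range (w+1-u)).map fun v => (u, v)) := by
    apply Multiset.bind_congr
    intro u hu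
    rw [Multiset.mem_range] at hu
    have : w+2-u = (w+1-u)+1 := by omega
    rw [this, Multiset.range_succ, Multiset.map_cons]
  rw [step, Multiset.bind_cons]
  congr 1
  rw [Multiset.range_succ (w+1), Multiset.cons_bind]
  have h0 : w+1-(w+1) = 0 := by omega
  simp only [h0, Multiset.range_zero, Multiset.map_zero, zero_add]
  rfl

lemma T2_succ (w : ℕ) : T2 (w+1) = diagM (w+1) + T2 w := by
  rw [T2, Multiset.range_succ (w+1), Multiset.cons_bind]
  rfl

lemma T1_eq_T2 (w : ℕ) : T1 w = T2 w := by
  induction w with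
  | zero => rw [T1_zero, T2_zero]
  | succ w ih => rw [T1_succ, T2_succ, ih]

lemma diagM_swap (n : ℕ) : (diagM n).map Prod.swap = diagM n := by
  rw [diagM, Multiset.map_map]
  rw [range_map_reflect n (Prod.swap ∘ fun u => (u, n - u))]
  apply Multiset.map_congr rfl
  intro i hi
  rw [Multiset.mem_range] at hi
  simp [Prod.swap]
  omega

lemma T1_swap (w : ℕ) : (T1 w).map Prod.swap = T1 w := by
  induction w with
  | zero => rw [T1_zero]; rfl
  | succ w ih => rw [T1_succ, Multiset.map_add, diagM_swap, ih]

lemma T1_mem {w : ℕ} {p : ℕ × ℕ} (h : p ∈ T1 w) : p.1 + p.2 ≤ w := by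
  simp only [T1, Multiset.mem_bind, Multiset.mem_map, Multiset.mem_range] at h
  obtain ⟨u, hu, v, hv, rfl⟩ := h
  simp; omega

lemma T1_rowreflect (w : ℕ) : (T1 w).map (fun p => (p.1, w - p.1 - p.2)) = T1 w := by
  rw [T1, Multiset.map_bind]
  apply Multiset.bind_congr
  intro u hu
  rw [Multiset.mem_range] at hu
  rw [Multiset.map_map]
  have h : w+1-u = (w-u)+1 := by omega
  rw [h, range_map_reflect (w-u) ((fun p => (p.1, w - p.1 - p.2)) ∘ fun v => (u, v))]
  apply Multiset.map_congr rfl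
  intro i hi
  rw [Multiset.mem_range] at hi
  simp
  omega



variable {A : Type*} [AddCommGroup A]

def msum2 (S T : Multiset A) : Multiset A := S.bind fun a => T.map fun b => a + b

lemma msum2_zero_left (T : Multiset A) : msum2 0 T = 0 := Multiset.zero_bind _

lemma msum2_singleton_left (c : A) (T : Multiset A) : msum2 {c} T = T.map (c + ·) :=
  Multiset.singleton_bind _ _

lemma msum2_bind_left {β : Type*} (S : Multiset β) (f : β → Multiset A) (T : Multiset A) :
    msum2 (S.bind f) T = S.bind fun b => msum2 (f b) T := Multiset.bind_assoc

lemma msum2_map_left (c : A) (S T : Multiset A) :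
    msum2 (S.map (c + ·)) T = (msum2 S T).map (c + ·) := by
  rw [msum2, Multiset.bind_map, msum2, Multiset.map_bind]
  apply Multiset.bind_congr
  intro a _
  rw [Multiset.map_map]
  apply Multiset.map_congr rfl
  intro b _
  simp [add_assoc]

lemma msum2_map_map (c d : A) (S T : Multiset A) :
    msum2 (S.map (c + ·)) (T.map (d + ·)) = (msum2 S T).map ((c + d) + ·) := by
  rw [msum2, Multiset.bind_map, msum2, Multiset.map_bind]
  apply Multiset.bind_congr
  intro a _
  rw [Multiset.map_map, Multiset.map_map]
  apply Multiset.map_congr rfl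
  intro b _
  simp only [Function.comp_apply]
  abel

def csum : ℕ → List A → Multiset A
  | 0, _ => {0}
  | _+1, [] => 0
  | w+1, x :: T => ((csum w (x :: T)).map (x + ·)) + csum (w+1) T
termination_by w L => (w, L.length)

@[simp] lemma csum_zero (L : List A) : csum 0 L = {0} := by
  rw [csum]

@[simp] lemma csum_nil (w : ℕ) : csum (w+1) ([] : List A) = 0 := by
  rw [csum]

lemma csum_cons (w : ℕ) (x : A) (T : List A) :
    csum (w+1) (x :: T) = ((csum w (x :: T)).map (x + ·)) + csum (w+1) T := by
  rw [csum]

lemma csum_single (x : A) : ∀ s : ℕ, csum s [x] = {s • x}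
  | 0 => by simp
  | s+1 => by
    rw [csum_cons, csum_single x s, csum_nil, add_zero, Multiset.map_singleton,
      succ_nsmul, add_comm]

lemma csum_unroll (x : A) (T : List A) : ∀ w : ℕ,
    csum w (x :: T) = (Multiset.range (w+1)).bind fun u => (csum (w-u) T).map ((u • x) + ·) := by
  intro w
  induction w with
  | zero => simp
  | succ w ih =>
    rw [csum_cons, ih, mrange_succ' (w+1), Multiset.cons_bind, Multiset.bind_map,
      Multiset.map_bind]
    rw [add_comm]
    congr 1
    · simp
    · apply Multiset.bind_congr
      intro u _
      rw [Multiset.map_map]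
      have h1 : w + 1 - (1 + u) = w - u := by omega
      rw [h1]
      apply Multiset.map_congr rfl
      intro b _
      simp only [Function.comp_apply]
      rw [add_comm 1 u, succ_nsmul]
      abel

lemma csum_map_add (c : A) : ∀ (w : ℕ) (T : List A),
    csum w (T.map (c + ·)) = (csum w T).map ((w • c) + ·)
  | 0, T => by simp
  | w+1, [] => by simp
  | w+1, x :: T => by
    have e1 : (x :: T).map (c + ·) = (c + x) :: T.map (c + ·) := rfl
    rw [e1, csum_cons, ← e1, csum_map_add c w (x :: T), csum_map_add c (w+1) T,
      csum_cons, Multiset.map_add, Multiset.map_map, Multiset.map_map]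
    congr 1
    apply Multiset.map_congr rfl
    intro b _
    simp only [Function.comp_apply, succ_nsmul]
    abel
termination_by w T => (w, T.length)


lemma csum_append (Q : List A) : ∀ (P : List A) (w : ℕ),
    csum w (P ++ Q) = (Multiset.range (w+1)).bind fun u => msum2 (csum u P) (csum (w-u) Q) := by
  intro P
  induction P with
  | nil =>
    intro w
    rw [List.nil_append, mrange_succ', Multiset.cons_bind, Multiset.bind_map]
    have h2 : ∀ u ∈ Multiset.range w,
        msum2 (csum (1+u) ([]:List A)) (csum (w-(1+u)) Q) = (fun _ => (0:Multiset A)) u := by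
      intro u _
      rw [add_comm 1 u, csum_nil, msum2_zero_left]
    rw [Multiset.bind_congr h2, Multiset.bind_zero, add_zero, csum_zero, Nat.sub_zero,
      msum2_singleton_left]
    simp
  | cons x P ih =>
    intro w
    have lhsT1 : csum w ((x :: P) ++ Q) = (T1 w).bind fun p =>
        (msum2 (csum p.2 P) (csum (w-p.1-p.2) Q)).map ((p.1 • x) + ·) := by
      rw [List.cons_append, csum_unroll, T1, Multiset.bind_assoc]
      apply Multiset.bind_congr
      intro u hu
      rw [Multiset.mem_range] at hu
      rw [ih (w-u), Multiset.map_bind, Multiset.bind_map]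
      have h1 : w+1-u = (w-u)+1 := by omega
      rw [h1]
    have rhsT2 : ((Multiset.range (w+1)).bind fun u => msum2 (csum u (x::P)) (csum (w-u) Q)) =
        (T2 w).bind fun p => (msum2 (csum p.2 P) (csum (w-p.1-p.2) Q)).map ((p.1 • x) + ·) := by
      rw [T2, Multiset.bind_assoc]
      apply Multiset.bind_congr
      intro r hr
      rw [Multiset.mem_range] at hr
      rw [csum_unroll, msum2_bind_left, Multiset.bind_map]
      apply Multiset.bind_congr
      intro u hu
      rw [Multiset.mem_range] at hu
      rw [msum2_map_left]
      rw [show w - r = w - u - (r - u) by omega]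
    rw [lhsT1, rhsT2, T1_eq_T2]

lemma csum_cons_cons (x y : A) (T : List A) (w : ℕ) :
    csum w (x :: y :: T) = (T1 w).bind fun p =>
      (csum (w-p.1-p.2) T).map ((p.1 • x + p.2 • y) + ·) := by
  rw [csum_unroll, T1, Multiset.bind_assoc]
  apply Multiset.bind_congr
  intro u hu
  rw [Multiset.mem_range] at hu
  rw [csum_unroll, Multiset.map_bind, Multiset.bind_map]
  have h1 : w+1-u = (w-u)+1 := by omega
  rw [h1]
  apply Multiset.bind_congr
  intro v _
  rw [Multiset.map_map]
  apply Multiset.map_congr rfl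
  intro b _
  simp only [Function.comp_apply]
  abel

lemma csum_perm {L L' : List A} (h : L.Perm L') : ∀ w, csum w L = csum w L' := by
  induction h with
  | nil => intro w; rfl
  | cons z hp ih =>
    intro w
    cases w with
    | zero => simp
    | succ w =>
      rw [csum_unroll, csum_unroll]
      apply Multiset.bind_congr
      intro u _
      rw [ih]
  | swap x y T =>
    intro w
    rw [csum_cons_cons, csum_cons_cons]
    conv_rhs => rw [← T1_swap, Multiset.bind_map]
    apply Multiset.bind_congr
    intro p hp
    have hm := T1_mem hp
    simp only [Function.comp_apply, Prod.fst_swap, Prod.snd_swap]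
    rw [show w - p.2 - p.1 = w - p.1 - p.2 by omega]
    apply Multiset.map_congr rfl
    intro b _
    abel
  | trans h1 h2 ih1 ih2 => intro w; rw [ih1, ih2]

lemma csum_coe_eq {L L' : List A} (h : (↑L : Multiset A) = ↑L') (w : ℕ) :
    csum w L = csum w L' :=
  csum_perm (Multiset.coe_eq_coe.mp h) w

lemma mid : ∀ (L : List A) (s t : ℕ),
    ((Multiset.range L.length).bind fun j =>
      (msum2 (csum s (L.take (j+1))) (csum t (L.drop j))).map ((L.getD j 0) + ·))
    = csum (s+t+1) L := by
  intro L
  induction L with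
  | nil => intro s t; simp
  | cons x T ih =>
    intro s t
    rw [List.length_cons, mrange_succ', Multiset.cons_bind, Multiset.bind_map]
    have e0 : (msum2 (csum s ((x::T).take (0+1))) (csum t ((x::T).drop 0))).map (((x::T).getD 0 0) + ·)
        = (Multiset.range (t+1)).bind fun v => (csum (t-v) T).map (((s+1+v) • x) + ·) := by
      simp only [zero_add, List.take_succ_cons, List.take_zero, List.drop_zero,
        List.getD_cons_zero]
      rw [csum_single, msum2_singleton_left, Multiset.map_map, csum_unroll, Multiset.map_bind]
      apply Multiset.bind_congr
      intro v _
      rw [Multiset.map_map]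
      apply Multiset.map_congr rfl
      intro b _
      simp only [Function.comp_apply]
      rw [add_nsmul, add_nsmul, one_nsmul]
      abel
    have e1 : ((Multiset.range T.length).bind fun j' =>
        (msum2 (csum s ((x::T).take ((1+j')+1))) (csum t ((x::T).drop (1+j')))).map
          (((x::T).getD (1+j') 0) + ·))
        = (Multiset.range (s+1)).bind fun u => (csum (s+t+1-u) T).map ((u • x) + ·) := by
      have estep : ∀ j' ∈ Multiset.range T.length,
          (msum2 (csum s ((x::T).take ((1+j')+1))) (csum t ((x::T).drop (1+j')))).map
            (((x::T).getD (1+j') 0) + ·)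
          = (Multiset.range (s+1)).bind fun u =>
              (((msum2 (csum (s-u) (T.take (j'+1))) (csum t (T.drop j'))).map
                ((T.getD j' 0) + ·)).map ((u • x) + ·)) := by
        intro j' _
        rw [show (1:ℕ)+j' = j'+1 by omega]
        rw [List.take_succ_cons, List.drop_succ_cons, List.getD_cons_succ]
        rw [csum_unroll, msum2_bind_left, Multiset.map_bind]
        apply Multiset.bind_congr
        intro u _
        rw [msum2_map_left, Multiset.map_map, Multiset.map_map]
        apply Multiset.map_congr rfl
        intro b _
        simp only [Function.comp_apply]
        abel
      rw [Multiset.bind_congr estep, Multiset.bind_bind]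
      apply Multiset.bind_congr
      intro u hu
      rw [Multiset.mem_range] at hu
      rw [← Multiset.map_bind, ih (s-u) t, show s-u+t+1 = s+t+1-u by omega]
    rw [e0, e1]
    conv_rhs => rw [csum_unroll, show s+t+1+1 = (s+1)+(t+1) by omega, Multiset.range_add,
      Multiset.add_bind, Multiset.bind_map]
    rw [add_comm]
    congr 1
    apply Multiset.bind_congr
    intro v _
    rw [show s+t+1-(s+1+v) = t - v by omega]

def coefG (c : ℕ × ℕ × ℕ) (p : ℕ × ℕ) : ℕ × ℕ × ℕ :=
  (c.1 - p.1 + 1, c.2.1 + p.2, c.2.2 + (c.1 - p.1 - p.2))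

def coef : ℕ → Multiset (ℕ × ℕ × ℕ)
  | 0 => {(0,0,0)}
  | l+1 => (coef l).bind fun c => (T1 c.1).map (coefG c)

def tauC (c : ℕ × ℕ × ℕ) : ℕ × ℕ × ℕ := (c.1, c.2.2, c.2.1)

lemma coef_symm : ∀ l, (coef l).map tauC = coef l := by
  intro l
  induction l with
  | zero => rfl
  | succ l ih =>
    show ((coef l).bind fun c => (T1 c.1).map (coefG c)).map tauC
        = (coef l).bind fun c => (T1 c.1).map (coefG c)
    rw [Multiset.map_bind]
    have h : ∀ c ∈ coef l, ((T1 c.1).map (coefG c)).map tauC = (T1 c.1).map (coefG (tauC c)) := by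
      intro c _
      rw [Multiset.map_map]
      conv_rhs => rw [← T1_rowreflect c.1, Multiset.map_map]
      apply Multiset.map_congr rfl
      intro p hp
      have hm := T1_mem hp
      simp only [Function.comp_apply, coefG, tauC]
      have h2 : c.1 - p.1 - (c.1 - p.1 - p.2) = p.2 := by omega
      rw [h2]
    rw [Multiset.bind_congr h]
    conv_rhs => rw [← ih, Multiset.bind_map]
    rfl

def childList (γ δ : A) (L : List A) (j : ℕ) : List A :=
  0 :: ((L.take (j+1)).map (γ + ·) ++ (L.drop j).map (δ + ·))

def Dl (γ δ : A) : ℕ → List A → Multiset A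
  | 0, _ => {0}
  | l+1, L => (Multiset.range L.length).bind fun j =>
      (Dl γ δ l (childList γ δ L j)).map ((L.getD j 0) + ·)

lemma csum_child (γ δ : A) (L : List A) (j w : ℕ) :
    csum w (childList γ δ L j) = (T1 w).bind fun p =>
      (msum2 (csum p.2 (L.take (j+1))) (csum (w-p.1-p.2) (L.drop j))).map
        ((p.2 • γ + (w-p.1-p.2) • δ) + ·) := by
  rw [childList, csum_unroll, T1, Multiset.bind_assoc]
  apply Multiset.bind_congr
  intro u hu
  rw [Multiset.mem_range] at hu
  have e1 : (csum (w-u) ((L.take (j+1)).map (γ + ·) ++ (L.drop j).map (δ + ·))).map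
      ((u • (0:A)) + ·) = csum (w-u) ((L.take (j+1)).map (γ + ·) ++ (L.drop j).map (δ + ·)) := by
    rw [smul_zero]
    simp
  rw [e1, csum_append, Multiset.bind_map]
  have h1 : w - u + 1 = w + 1 - u := by omega
  rw [h1]
  apply Multiset.bind_congr
  intro a _
  rw [csum_map_add, csum_map_add, msum2_map_map]

theorem Dl_closed (γ δ : A) : ∀ (l : ℕ) (L : List A),
    Dl γ δ l L = (coef l).bind fun c => (csum c.1 L).map ((c.2.1 • γ + c.2.2 • δ) + ·) := by
  intro l
  induction l with
  | zero =>
    intro L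
    show ({0} : Multiset A) = Multiset.bind {((0:ℕ),(0:ℕ),(0:ℕ))} _
    rw [Multiset.singleton_bind]
    simp
  | succ l ih =>
    intro L
    show ((Multiset.range L.length).bind fun j =>
        (Dl γ δ l (childList γ δ L j)).map ((L.getD j 0) + ·)) = _
    have key : ∀ j ∈ Multiset.range L.length,
        (Dl γ δ l (childList γ δ L j)).map ((L.getD j 0) + ·) =
        (coef l).bind fun c => (T1 c.1).bind fun p =>
          ((msum2 (csum p.2 (L.take (j+1))) (csum (c.1-p.1-p.2) (L.drop j))).map
            ((L.getD j 0) + ·)).map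
            ((c.2.1 • γ + c.2.2 • δ + (p.2 • γ + (c.1-p.1-p.2) • δ)) + ·) := by
      intro j _
      rw [ih, Multiset.map_bind]
      apply Multiset.bind_congr
      intro c _
      rw [csum_child, Multiset.map_bind, Multiset.map_bind]
      apply Multiset.bind_congr
      intro p _
      rw [Multiset.map_map, Multiset.map_map, Multiset.map_map]
      apply Multiset.map_congr rfl
      intro b _
      simp only [Function.comp_apply]
      abel
    rw [Multiset.bind_congr key, Multiset.bind_bind]
    have swap2 : ∀ c ∈ coef l, ((Multiset.range L.length).bind fun j => (T1 c.1).bind fun p =>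
          ((msum2 (csum p.2 (L.take (j+1))) (csum (c.1-p.1-p.2) (L.drop j))).map
            ((L.getD j 0) + ·)).map
            ((c.2.1 • γ + c.2.2 • δ + (p.2 • γ + (c.1-p.1-p.2) • δ)) + ·))
        = (T1 c.1).bind fun p =>
            (csum (p.2 + (c.1-p.1-p.2) + 1) L).map
            ((c.2.1 • γ + c.2.2 • δ + (p.2 • γ + (c.1-p.1-p.2) • δ)) + ·) := by
      intro c _
      rw [Multiset.bind_bind]
      apply Multiset.bind_congr
      intro p _
      rw [← Multiset.map_bind, mid L p.2 (c.1-p.1-p.2)]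
    rw [Multiset.bind_congr swap2]
    show _ = ((coef l).bind fun c => (T1 c.1).map (coefG c)).bind _
    rw [Multiset.bind_assoc]
    apply Multiset.bind_congr
    intro c _
    rw [Multiset.bind_map]
    apply Multiset.bind_congr
    intro p hp
    have hm := T1_mem hp
    simp only [Function.comp_apply, coefG]
    rw [show p.2 + (c.1-p.1-p.2) + 1 = c.1 - p.1 + 1 by omega]
    apply Multiset.map_congr rfl
    intro b _
    rw [add_nsmul, add_nsmul]
    abel

theorem Dl_swap (γ δ : A) (l : ℕ) {L L' : List A} (h : (↑L : Multiset A) = ↑L') :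
    Dl γ δ l L = Dl δ γ l L' := by
  rw [Dl_closed, Dl_closed]
  conv_lhs => rw [← coef_symm l, Multiset.bind_map]
  apply Multiset.bind_congr
  intro c _
  have h1 : csum ((tauC c).1) L = csum c.1 L' := csum_coe_eq h _
  rw [h1]
  apply Multiset.map_congr rfl
  intro b _
  simp only [tauC]
  abel

/- ===== concrete side ===== -/

def ostat (s : Finset (ℕ × ℕ)) (k : ℕ) : ℕ := (s.filter fun e => e.1 ≤ k ∧ k < e.2).card
def fstat (s : Finset (ℕ × ℕ)) (k : ℕ) : ℕ := (s.filter fun e => e.2 ≤ k).card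

def gmap (x : ℕ) : ℕ × ℕ → ℕ × ℕ := fun e => (shiftV x e.1, shiftV x e.2)

lemma addFirst_eq (x : ℕ) (s : Finset (ℕ × ℕ)) :
    addFirst x s = insert (1, x) (s.image (gmap x)) := rfl

lemma shiftV_lt_iff (x u v : ℕ) : shiftV x u < shiftV x v ↔ u < v := by
  simp only [shiftV]; split_ifs <;> omega

lemma one_le_shiftV (x v : ℕ) : 1 ≤ shiftV x v := by
  simp only [shiftV]; split_ifs <;> omega

lemma one_lt_shiftV (x : ℕ) {v : ℕ} (hv : 1 ≤ v) : 1 < shiftV x v := by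
  simp only [shiftV]; split_ifs <;> omega

def PosF (s : Finset (ℕ × ℕ)) : Prop := ∀ e ∈ s, 1 ≤ e.1

lemma shiftV_inj (x : ℕ) : Function.Injective (shiftV x) := by
  intro u v h
  have h1 := shiftV_lt_iff x u v
  have h2 := shiftV_lt_iff x v u
  omega

lemma gmap_inj (x : ℕ) : Function.Injective (gmap x) := by
  intro a b h
  rw [gmap, gmap, Prod.ext_iff] at h
  obtain ⟨h1, h2⟩ := h
  exact Prod.ext (shiftV_inj x h1) (shiftV_inj x h2)

lemma not_mem_image (x : ℕ) {s : Finset (ℕ × ℕ)} (hpos : PosF s) : (1, x) ∉ s.image (gmap x) := by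
  intro h
  rw [Finset.mem_image] at h
  obtain ⟨e, he, heq⟩ := h
  have := one_lt_shiftV x (hpos e he)
  rw [gmap, Prod.ext_iff] at heq
  omega

lemma posF_addFirst (x : ℕ) (s : Finset (ℕ × ℕ)) : PosF (addFirst x s) := by
  intro e he
  rw [addFirst_eq, Finset.mem_insert] at he
  rcases he with rfl | he
  · exact le_refl 1
  · rw [Finset.mem_image] at he
    obtain ⟨f, _, rfl⟩ := he
    exact one_le_shiftV x f.1

lemma card_addFirst (x : ℕ) {s : Finset (ℕ × ℕ)} (hpos : PosF s) : (addFirst x s).card = s.card + 1 := by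
  rw [addFirst_eq, Finset.card_insert_of_notMem (not_mem_image x hpos),
    Finset.card_image_of_injective _ (gmap_inj x)]

lemma card_filter_addFirst (x : ℕ) {s : Finset (ℕ × ℕ)} (hpos : PosF s) (q : ℕ × ℕ → Prop) [DecidablePred q] :
    ((addFirst x s).filter q).card
      = (if q (1, x) then 1 else 0) + (s.filter fun e => q (gmap x e)).card := by
  rw [addFirst_eq, Finset.filter_insert]
  have himg : (s.image (gmap x)).filter q = (s.filter fun e => q (gmap x e)).image (gmap x) :=
    Finset.filter_image
  split_ifs with h
  · rw [Finset.card_insert_of_notMem, himg, Finset.card_image_of_injective _ (gmap_inj x)]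
    · omega
    · intro hc
      exact not_mem_image x hpos (Finset.filter_subset _ _ hc)
  · rw [himg, Finset.card_image_of_injective _ (gmap_inj x), zero_add]

lemma card_filter_insert_product (a : ℕ × ℕ) (t : Finset (ℕ × ℕ))
    (P : (ℕ × ℕ) × (ℕ × ℕ) → Prop) [DecidablePred P]
    (ha : a ∉ t) (hPa : ¬ P (a, a)) (h2 : ∀ e ∈ t, ¬ P (e, a)) :
    (((insert a t) ×ˢ (insert a t)).filter P).card
      = (t.filter fun e => P (a, e)).card + ((t ×ˢ t).filter P).card := by
  have hset : ((insert a t) ×ˢ (insert a t)).filter P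
      = ((t.filter fun e => P (a, e)).image fun e => (a, e)) ∪ (t ×ˢ t).filter P := by
    ext p
    obtain ⟨p1, p2⟩ := p
    simp only [Finset.mem_filter, Finset.mem_product, Finset.mem_insert, Finset.mem_union,
      Finset.mem_image]
    constructor
    · rintro ⟨⟨h1' | h1', h2' | h2'⟩, hP⟩
      · subst h1'; subst h2'; exact absurd hP hPa
      · subst h1'; exact Or.inl ⟨p2, ⟨h2', hP⟩, rfl⟩
      · subst h2'; exact absurd hP (h2 _ h1')
      · exact Or.inr ⟨⟨h1', h2'⟩, hP⟩
    · rintro (⟨e, ⟨he, hPe⟩, heq⟩ | ⟨⟨hp1, hp2⟩, hP⟩)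
      · obtain ⟨rfl, rfl⟩ : a = p1 ∧ e = p2 := by simpa [Prod.ext_iff] using heq
        exact ⟨⟨Or.inl rfl, Or.inr he⟩, hPe⟩
      · exact ⟨⟨Or.inr hp1, Or.inr hp2⟩, hP⟩
  rw [hset, Finset.card_union_of_disjoint, Finset.card_image_of_injective _ (Prod.mk_right_injective a)]
  rw [Finset.disjoint_left]
  intro p hp hp'
  rw [Finset.mem_image] at hp
  obtain ⟨e, _, rfl⟩ := hp
  rw [Finset.mem_filter, Finset.mem_product] at hp'
  exact ha hp'.1.1

lemma card_filter_product_image (x : ℕ) (s : Finset (ℕ × ℕ))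
    (P Q : (ℕ × ℕ) × (ℕ × ℕ) → Prop) [DecidablePred P] [DecidablePred Q]
    (hPQ : ∀ e f, P (gmap x e, gmap x f) ↔ Q (e, f)) :
    (((s.image (gmap x)) ×ˢ (s.image (gmap x))).filter P).card = ((s ×ˢ s).filter Q).card := by
  symm
  apply Finset.card_bij (fun p _ => (gmap x p.1, gmap x p.2))
  · intro p hp
    rw [Finset.mem_filter, Finset.mem_product] at hp ⊢
    refine ⟨⟨Finset.mem_image_of_mem _ hp.1.1, Finset.mem_image_of_mem _ hp.1.2⟩, ?_⟩
    exact (hPQ p.1 p.2).mpr hp.2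
  · intro p hp q hq hpq
    rw [Prod.ext_iff] at hpq
    exact Prod.ext (gmap_inj x hpq.1) (gmap_inj x hpq.2)
  · intro b hb
    obtain ⟨b1, b2⟩ := b
    rw [Finset.mem_filter, Finset.mem_product] at hb
    obtain ⟨⟨hb1, hb2⟩, hbP⟩ := hb
    rw [Finset.mem_image] at hb1 hb2
    obtain ⟨e, he, rfl⟩ := hb1
    obtain ⟨f, hf, rfl⟩ := hb2
    refine ⟨(e, f), ?_, rfl⟩
    rw [Finset.mem_filter, Finset.mem_product]
    exact ⟨⟨he, hf⟩, (hPQ e f).mp hbP⟩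

lemma crStat_addFirst (k : ℕ) {s : Finset (ℕ × ℕ)} (hpos : PosF s) :
    crStat (addFirst (k+2) s) = ostat s k + crStat s := by
  rw [crStat, addFirst_eq, card_filter_insert_product]
  · congr 1
    · rw [Finset.filter_image, Finset.card_image_of_injective _ (gmap_inj (k+2)), ostat]
      congr 1
      apply Finset.filter_congr
      intro e he
      have hp := hpos e he
      simp only [gmap, shiftV]
      constructor
      · intro h; split_ifs at h <;> omega
      · intro h
        refine ⟨?_, ?_, ?_⟩ <;> split_ifs <;> omega
    · rw [crStat]
      apply card_filter_product_image
      intro e f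
      simp only [gmap]
      rw [shiftV_lt_iff, shiftV_lt_iff, shiftV_lt_iff]
  · exact not_mem_image _ hpos
  · simp
  · intro e he
    rw [Finset.mem_image] at he
    obtain ⟨f, _, rfl⟩ := he
    have := one_le_shiftV (k+2) f.1
    simp only [gmap]
    omega

lemma neStat_addFirst (k : ℕ) {s : Finset (ℕ × ℕ)} (hpos : PosF s) :
    neStat (addFirst (k+2) s) = fstat s k + neStat s := by
  rw [neStat, addFirst_eq, card_filter_insert_product]
  · congr 1
    · rw [Finset.filter_image, Finset.card_image_of_injective _ (gmap_inj (k+2)), fstat]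
      congr 1
      apply Finset.filter_congr
      intro e he
      have hp := hpos e he
      simp only [gmap, shiftV]
      constructor
      · intro h; split_ifs at h <;> omega
      · intro h
        split_ifs <;> omega
    · rw [neStat]
      apply card_filter_product_image
      intro e f
      simp only [gmap]
      rw [shiftV_lt_iff, shiftV_lt_iff]
  · exact not_mem_image _ hpos
  · simp
  · intro e he
    rw [Finset.mem_image] at he
    obtain ⟨f, _, rfl⟩ := he
    have := one_le_shiftV (k+2) f.1
    simp only [gmap]
    omega

lemma ostat_addFirst_zero (k : ℕ) {s : Finset (ℕ × ℕ)} (hpos : PosF s) :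
    ostat (addFirst (k+2) s) 0 = 0 := by
  rw [ostat, card_filter_addFirst (k+2) hpos]
  rw [if_neg (by omega)]
  rw [zero_add, Finset.card_eq_zero, Finset.filter_eq_empty_iff]
  intro e _
  have := one_le_shiftV (k+2) e.1
  simp only [gmap]
  omega

lemma fstat_addFirst_zero (k : ℕ) {s : Finset (ℕ × ℕ)} (hpos : PosF s) :
    fstat (addFirst (k+2) s) 0 = 0 := by
  rw [fstat, card_filter_addFirst (k+2) hpos]
  rw [if_neg (by omega)]
  rw [zero_add, Finset.card_eq_zero, Finset.filter_eq_empty_iff]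
  intro e _
  have := one_le_shiftV (k+2) e.2
  simp only [gmap]
  omega

lemma ostat_addFirst_mid (k i : ℕ) {s : Finset (ℕ × ℕ)} (hpos : PosF s) (hi : i ≤ k) :
    ostat (addFirst (k+2) s) (i+1) = ostat s i + 1 := by
  rw [ostat, card_filter_addFirst (k+2) hpos]
  rw [if_pos (by omega)]
  rw [add_comm 1, ostat]
  have hfil : s.filter (fun e => (gmap (k+2) e).1 ≤ i+1 ∧ i+1 < (gmap (k+2) e).2)
      = s.filter (fun e => e.1 ≤ i ∧ i < e.2) := by
    apply Finset.filter_congr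
    intro e _
    simp only [gmap, shiftV]
    split_ifs <;> omega
  rw [hfil]

lemma fstat_addFirst_mid (k i : ℕ) {s : Finset (ℕ × ℕ)} (hpos : PosF s) (hi : i ≤ k) :
    fstat (addFirst (k+2) s) (i+1) = fstat s i := by
  rw [fstat, card_filter_addFirst (k+2) hpos]
  rw [if_neg (by omega)]
  rw [zero_add, fstat]
  congr 1
  apply Finset.filter_congr
  intro e _
  simp only [gmap, shiftV]
  split_ifs <;> omega

lemma ostat_addFirst_high (k r : ℕ) {s : Finset (ℕ × ℕ)} (hpos : PosF s) :
    ostat (addFirst (k+2) s) (k+2+r) = ostat s (k+r) := by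
  rw [ostat, card_filter_addFirst (k+2) hpos]
  rw [if_neg (by omega)]
  rw [zero_add, ostat]
  congr 1
  apply Finset.filter_congr
  intro e _
  simp only [gmap, shiftV]
  split_ifs <;> omega

lemma fstat_addFirst_high (k r : ℕ) {s : Finset (ℕ × ℕ)} (hpos : PosF s) :
    fstat (addFirst (k+2) s) (k+2+r) = fstat s (k+r) + 1 := by
  rw [fstat, card_filter_addFirst (k+2) hpos]
  rw [if_pos (by omega)]
  rw [add_comm 1, fstat]
  have hfil : s.filter (fun e => (gmap (k+2) e).2 ≤ k+2+r)
      = s.filter (fun e => e.2 ≤ k+r) := by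
    apply Finset.filter_congr
    intro e _
    simp only [gmap, shiftV]
    split_ifs <;> omega
  rw [hfil]

def philist (γ δ : A) (s : Finset (ℕ × ℕ)) : List A :=
  (List.range (2*s.card+1)).map fun k => ostat s k • γ + fstat s k • δ

lemma philist_length (γ δ : A) (s : Finset (ℕ × ℕ)) :
    (philist γ δ s).length = 2*s.card+1 := by
  simp [philist]

lemma philist_getElem (γ δ : A) (s : Finset (ℕ × ℕ)) (i : ℕ)
    (h : i < (philist γ δ s).length) :
    (philist γ δ s)[i] = ostat s i • γ + fstat s i • δ := by
  simp [philist]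

lemma philist_addFirst (γ δ : A) {s : Finset (ℕ × ℕ)} (hpos : PosF s) (k : ℕ)
    (hk : k ≤ 2*s.card) :
    philist γ δ (addFirst (k+2) s) = childList γ δ (philist γ δ s) k := by
  have hlenL : (philist γ δ s).length = 2*s.card+1 := philist_length γ δ s
  have hlen1 : (philist γ δ (addFirst (k+2) s)).length = 2*s.card+3 := by
    rw [philist_length, card_addFirst _ hpos]; omega
  have hlA : (((philist γ δ s).take (k+1)).map (γ + ·)).length = k+1 := by
    simp [List.length_take, hlenL]; omega
  have hlen2 : (childList γ δ (philist γ δ s) k).length = 2*s.card+3 := by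
    simp only [childList, List.length_cons, List.length_append, List.length_map,
      List.length_take, List.length_drop, hlenL]
    omega
  apply List.ext_getElem (by rw [hlen1, hlen2])
  intro i h1 h2
  rw [philist_getElem]
  simp only [childList]
  rcases Nat.lt_or_ge i 1 with hi | hi
  · have hi0 : i = 0 := by omega
    subst hi0
    rw [List.getElem_cons_zero, ostat_addFirst_zero k hpos, fstat_addFirst_zero k hpos]
    simp
  · obtain ⟨j, rfl⟩ : ∃ j, i = j+1 := ⟨i-1, by omega⟩
    rw [List.getElem_cons_succ]
    rcases Nat.lt_or_ge j (k+1) with hj | hj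
    · rw [List.getElem_append_left (by rw [hlA]; omega)]
      rw [List.getElem_map, List.getElem_take, philist_getElem]
      have h1' : j ≤ k := by omega
      rw [ostat_addFirst_mid k j hpos h1', fstat_addFirst_mid k j hpos h1', succ_nsmul]
      abel
    · rw [List.getElem_append_right (by rw [hlA]; omega)]
      rw [List.getElem_map, List.getElem_drop, philist_getElem]
      obtain ⟨r, rfl⟩ : ∃ r, j = k+1+r := ⟨j-(k+1), by omega⟩
      rw [show k+1+r+1 = k+2+r by omega]
      rw [ostat_addFirst_high k r hpos, fstat_addFirst_high k r hpos]
      rw [show k+1+r - (((philist γ δ s).take (k+1)).map (γ + ·)).length = r by rw [hlA]; omega]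
      rw [show k + r = k + r by rfl, succ_nsmul]
      abel

lemma Icc_two_val (n : ℕ) :
    (Finset.Icc 2 (2*n+2)).val = (Multiset.range (2*n+1)).map (· + 2) := by
  have h : Finset.Icc 2 (2*n+2) = (Finset.range (2*n+1)).map ⟨(· + 2), fun a b h => by simpa using h⟩ := by
    ext v
    simp only [Finset.mem_Icc, Finset.mem_map, Finset.mem_range, Function.Embedding.coeFn_mk]
    constructor
    · intro hv
      exact ⟨v - 2, by omega, by show v - 2 + 2 = v; omega⟩
    · rintro ⟨a, ha, rfl⟩
      show 2 ≤ a + 2 ∧ a + 2 ≤ 2*n+2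
      omega
  rw [h, Finset.map_val, Finset.range_val]
  rfl

lemma childrenM_eq (s : Finset (ℕ × ℕ)) :
    childrenM s = (Multiset.range (2*s.card+1)).map fun k => addFirst (k+2) s := by
  rw [childrenM, Icc_two_val, Multiset.map_map]
  rfl

lemma levelM_succ' (l : ℕ) : ∀ s, levelM s (l+1) = (childrenM s).bind fun c => levelM c l := by
  induction l with
  | zero =>
    intro s
    show (levelM s 0).bind childrenM = _
    rw [show levelM s 0 = {s} from rfl, Multiset.singleton_bind]
    have h : ∀ c ∈ childrenM s, levelM c 0 = ({c} : Multiset _) := fun c _ => rfl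
    rw [Multiset.bind_congr h, Multiset.bind_singleton]
    exact (Multiset.map_id' _).symm
  | succ l ih =>
    intro s
    show (levelM s (l+1)).bind childrenM = _
    rw [ih s, Multiset.bind_assoc]
    apply Multiset.bind_congr
    intro c _
    rfl

lemma philist_getD (γ δ : A) (s : Finset (ℕ × ℕ)) (k : ℕ) (hk : k < 2*s.card+1) :
    (philist γ δ s).getD k 0 = ostat s k • γ + fstat s k • δ := by
  have hlen : k < (philist γ δ s).length := by rw [philist_length]; omega
  rw [List.getD_eq_getElem?_getD, List.getElem?_eq_getElem hlen, Option.getD_some,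
    philist_getElem]

lemma coe_eq_range_map : ∀ L : List A,
    (↑L : Multiset A) = (Multiset.range L.length).map (fun j => L.getD j 0) := by
  intro L
  induction L with
  | nil => simp
  | cons x T ih =>
    rw [List.length_cons, mrange_succ', Multiset.map_cons, Multiset.map_map]
    have h : ∀ j ∈ Multiset.range T.length,
        ((fun j => (x :: T).getD j 0) ∘ (1 + ·)) j = T.getD j 0 := by
      intro j _
      simp only [Function.comp_apply]
      rw [add_comm 1 j, List.getD_cons_succ]
    rw [Multiset.map_congr rfl h, ← ih, List.getD_cons_zero]
    rfl

lemma Dl_one (γ δ : A) (L : List A) : Dl γ δ 1 L = (↑L : Multiset A) := by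
  show ((Multiset.range L.length).bind fun j =>
      (Dl γ δ 0 (childList γ δ L j)).map ((L.getD j 0) + ·)) = _
  have h : ∀ j ∈ Multiset.range L.length,
      (Dl γ δ 0 (childList γ δ L j)).map ((L.getD j 0) + ·) = {L.getD j 0} := by
    intro j _
    show (({0} : Multiset A)).map _ = _
    simp
  rw [Multiset.bind_congr h, Multiset.bind_singleton, ← coe_eq_range_map]

lemma stat_addFirst (γ δ : A) {s : Finset (ℕ × ℕ)} (hpos : PosF s) (k : ℕ) :
    crStat (addFirst (k+2) s) • γ + neStat (addFirst (k+2) s) • δ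
      = (crStat s • γ + neStat s • δ) + (ostat s k • γ + fstat s k • δ) := by
  rw [crStat_addFirst k hpos, neStat_addFirst k hpos, add_nsmul, add_nsmul]
  abel

lemma bridge (γ δ : A) : ∀ (l : ℕ) (s : Finset (ℕ × ℕ)), PosF s →
    (levelM s l).map (fun K => crStat K • γ + neStat K • δ)
      = (Dl γ δ l (philist γ δ s)).map
          (fun v => (crStat s • γ + neStat s • δ) + v) := by
  intro l
  induction l with
  | zero =>
    intro s _
    show ({s} : Multiset _).map _ = (({0} : Multiset A)).map _
    simp
  | succ l ih =>
    intro s hpos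
    rw [levelM_succ', Multiset.map_bind, childrenM_eq, Multiset.bind_map]
    have hstep : ∀ k ∈ Multiset.range (2*s.card+1),
        (levelM (addFirst (k+2) s) l).map (fun K => crStat K • γ + neStat K • δ)
        = ((Dl γ δ l (childList γ δ (philist γ δ s) k)).map
            ((ostat s k • γ + fstat s k • δ) + ·)).map
            (fun v => (crStat s • γ + neStat s • δ) + v) := by
      intro k hk
      rw [Multiset.mem_range] at hk
      rw [ih (addFirst (k+2) s) (posF_addFirst _ s),
        philist_addFirst γ δ hpos k (by omega), Multiset.map_map]
      apply Multiset.map_congr rfl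
      intro b _
      simp only [Function.comp_apply]
      rw [stat_addFirst γ δ hpos k]
      abel
    rw [Multiset.bind_congr hstep]
    show _ = ((Multiset.range (philist γ δ s).length).bind fun j =>
        (Dl γ δ l (childList γ δ (philist γ δ s) j)).map
          (((philist γ δ s).getD j 0) + ·)).map _
    rw [Multiset.map_bind, philist_length]
    apply Multiset.bind_congr
    intro k hk
    rw [Multiset.mem_range] at hk
    rw [philist_getD γ δ s k hk]


end SAB

/-- if the multiset of values of `s_{α,β}` on `T(M,l)` equals the multiset of
values of `s_{β,α}` on `T(N,l)` for `l = 0, 1`, then they are equal for every `l ≥ 0`. -/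
theorem sab_sba_coincide_of_first_two_levels
    {A : Type*} [AddCommGroup A] (α β : A) (n : ℕ)
    (M N : Finset (ℕ × ℕ)) (hM : IsMatching n M) (hN : IsMatching n N)
    (h0 : (levelM M 0).map (fun K => crStat K • α + neStat K • β)
        = (levelM N 0).map (fun K => crStat K • β + neStat K • α))
    (h1 : (levelM M 1).map (fun K => crStat K • α + neStat K • β)
        = (levelM N 1).map (fun K => crStat K • β + neStat K • α)) :
    ∀ l : ℕ, (levelM M l).map (fun K => crStat K • α + neStat K • β)
        = (levelM N l).map (fun K => crStat K • β + neStat K • α) := by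
  intro l
  have hMpos : SAB.PosF M := fun e he => (hM.2.1 e he).2.1
  have hNpos : SAB.PosF N := fun e he => (hN.2.1 e he).2.1
  have key0 : crStat M • α + neStat M • β = crStat N • β + neStat N • α := by
    have h := h0
    rw [show levelM M 0 = {M} from rfl, show levelM N 0 = {N} from rfl,
      Multiset.map_singleton, Multiset.map_singleton] at h
    exact Multiset.singleton_inj.mp h
  have key1 : (↑(SAB.philist α β M) : Multiset A) = ↑(SAB.philist β α N) := by
    have hb1 := SAB.bridge α β 1 M hMpos
    have hb2 := SAB.bridge β α 1 N hNpos
    rw [h1, hb2, SAB.Dl_one, SAB.Dl_one, ← key0] at hb1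
    exact (Multiset.map_injective (add_right_injective _) hb1).symm
  rw [SAB.bridge α β l M hMpos, SAB.bridge β α l N hNpos, SAB.Dl_swap α β l key1, key0]
end

section
/- For every k ∈ ℕ₀ and n ∈ ℕ, the number of matchings on [2n] with exactly k crossings equals the number of matchings on [2n] with exactly k nestings. -/
open Finset
attribute [local instance] Classical.propDecidable

def Bdd (b : ℕ) (s : Finset (ℕ × ℕ)) : Prop := ∀ e ∈ s, e.1 < b

def IsMatchingOn (V : Finset ℕ) (s : Finset (ℕ × ℕ)) : Prop :=
  (∀ e ∈ s, e.1 ∈ V ∧ e.2 ∈ V ∧ e.1 < e.2) ∧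
  ∀ v ∈ V, ∃! e, e ∈ s ∧ (v = e.1 ∨ v = e.2)

noncomputable def cnt (V : Finset ℕ) (b : ℕ) (f : Finset (ℕ × ℕ) → ℕ) (t : ℕ → Prop) : ℕ :=
  ((V ×ˢ V).powerset.filter fun s => IsMatchingOn V s ∧ Bdd b s ∧ t (f s)).card

lemma sum_lower (F : ℕ → ℕ) : ∀ (n : ℕ) (D : Finset ℕ), D.card = n →
    ∑ d ∈ D, F ((D.filter (· < d)).card) = ∑ i ∈ range n, F i := by
  intro n
  induction n with
  | zero => intro D hD; simp [Finset.card_eq_zero.mp hD]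
  | succ n ih =>
    intro D hD
    have hne : D.Nonempty := by rw [← Finset.card_pos, hD]; omega
    set m := D.max' hne with hm
    have hmD : m ∈ D := D.max'_mem hne
    have hD' : (D.erase m).card = n := by
      rw [Finset.card_erase_of_mem hmD, hD]
      omega
    have key : ∀ d ∈ D.erase m,
        F ((D.filter (· < d)).card) = F (((D.erase m).filter (· < d)).card) := by
      intro d hd
      have hfe : D.filter (· < d) = (D.erase m).filter (· < d) := by
        ext x
        simp only [mem_filter, mem_erase]
        constructor
        · rintro ⟨hx, hxd⟩
          refine ⟨⟨?_, hx⟩, hxd⟩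
          rintro rfl
          exact absurd (D.le_max' d (Finset.mem_of_mem_erase hd)) (by omega)
        · rintro ⟨⟨_, hx⟩, hxd⟩; exact ⟨hx, hxd⟩
      rw [hfe]
    have hfm : (D.filter (· < m)).card = n := by
      have h2 : D.filter (· < m) = D.erase m := by
        ext x
        simp only [mem_filter, mem_erase]
        constructor
        · rintro ⟨hx, hxm⟩; exact ⟨by omega, hx⟩
        · rintro ⟨hxm, hx⟩
          exact ⟨hx, lt_of_le_of_ne (D.le_max' x hx) hxm⟩
      rw [h2, hD']
    calc ∑ d ∈ D, F ((D.filter (· < d)).card)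
        = F ((D.filter (· < m)).card) + ∑ d ∈ D.erase m, F ((D.filter (· < d)).card) :=
          (Finset.add_sum_erase D _ hmD).symm
      _ = F n + ∑ d ∈ D.erase m, F (((D.erase m).filter (· < d)).card) := by
          rw [hfm, Finset.sum_congr rfl key]
      _ = F n + ∑ i ∈ range n, F i := by rw [ih _ hD']
      _ = ∑ i ∈ range (n+1), F i := by rw [Finset.sum_range_succ, add_comm]

lemma sum_upper (F : ℕ → ℕ) : ∀ (n : ℕ) (D : Finset ℕ), D.card = n →
    ∑ d ∈ D, F ((D.filter (d < ·)).card) = ∑ i ∈ range n, F i := by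
  intro n
  induction n with
  | zero => intro D hD; simp [Finset.card_eq_zero.mp hD]
  | succ n ih =>
    intro D hD
    have hne : D.Nonempty := by rw [← Finset.card_pos, hD]; omega
    set m := D.min' hne with hm
    have hmD : m ∈ D := D.min'_mem hne
    have hD' : (D.erase m).card = n := by
      rw [Finset.card_erase_of_mem hmD, hD]
      omega
    have key : ∀ d ∈ D.erase m,
        F ((D.filter (d < ·)).card) = F (((D.erase m).filter (d < ·)).card) := by
      intro d hd
      have hfe : D.filter (d < ·) = (D.erase m).filter (d < ·) := by
        ext x
        simp only [mem_filter, mem_erase]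
        constructor
        · rintro ⟨hx, hxd⟩
          refine ⟨⟨?_, hx⟩, hxd⟩
          rintro rfl
          exact absurd (D.min'_le d (Finset.mem_of_mem_erase hd)) (by omega)
        · rintro ⟨⟨_, hx⟩, hxd⟩; exact ⟨hx, hxd⟩
      rw [hfe]
    have hfm : (D.filter (m < ·)).card = n := by
      have h2 : D.filter (m < ·) = D.erase m := by
        ext x
        simp only [mem_filter, mem_erase]
        constructor
        · rintro ⟨hx, hxm⟩; exact ⟨by omega, hx⟩
        · rintro ⟨hxm, hx⟩
          exact ⟨hx, lt_of_le_of_ne (D.min'_le x hx) (Ne.symm hxm)⟩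
      rw [h2, hD']
    calc ∑ d ∈ D, F ((D.filter (d < ·)).card)
        = F ((D.filter (m < ·)).card) + ∑ d ∈ D.erase m, F ((D.filter (d < ·)).card) :=
          (Finset.add_sum_erase D _ hmD).symm
      _ = F n + ∑ d ∈ D.erase m, F (((D.erase m).filter (d < ·)).card) := by
          rw [hfm, Finset.sum_congr rfl key]
      _ = F n + ∑ i ∈ range n, F i := by rw [ih _ hD']
      _ = ∑ i ∈ range (n+1), F i := by rw [Finset.sum_range_succ, add_comm]

lemma crStat_sum (s : Finset (ℕ × ℕ)) :
    crStat s = ∑ a ∈ s, ∑ b ∈ s, if a.1 < b.1 ∧ b.1 < a.2 ∧ a.2 < b.2 then 1 else 0 := by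
  rw [crStat, Finset.card_filter, Finset.sum_product]

lemma neStat_sum (s : Finset (ℕ × ℕ)) :
    neStat s = ∑ a ∈ s, ∑ b ∈ s, if a.1 < b.1 ∧ b.2 < a.2 then 1 else 0 := by
  rw [neStat, Finset.card_filter, Finset.sum_product]

lemma crStat_insert (s : Finset (ℕ × ℕ)) (o d : ℕ) (hbd : ∀ e ∈ s, e.1 < o) :
    crStat (insert (o,d) s) = crStat s + (s.filter fun e => o < e.2 ∧ e.2 < d).card := by
  have hnot : (o,d) ∉ s := fun h => lt_irrefl o (hbd _ h)
  rw [crStat_sum, crStat_sum, Finset.sum_insert hnot]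
  simp only [Finset.sum_insert hnot]
  have e1 : ∑ b ∈ s, (if (o,d).1 < b.1 ∧ b.1 < (o,d).2 ∧ (o,d).2 < b.2 then (1:ℕ) else 0) = 0 :=
    Finset.sum_eq_zero fun b hb => by
      have := hbd b hb; rw [if_neg]; simp only; omega
  have e2 : ∀ a ∈ s, (if a.1 < (o,d).1 ∧ (o,d).1 < a.2 ∧ a.2 < (o,d).2 then (1:ℕ) else 0)
      + ∑ b ∈ s, (if a.1 < b.1 ∧ b.1 < a.2 ∧ a.2 < b.2 then (1:ℕ) else 0)
      = (if o < a.2 ∧ a.2 < d then (1:ℕ) else 0)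
      + ∑ b ∈ s, (if a.1 < b.1 ∧ b.1 < a.2 ∧ a.2 < b.2 then (1:ℕ) else 0) := by
    intro a ha
    congr 1
    have := hbd a ha
    by_cases h : o < a.2 ∧ a.2 < d
    · rw [if_pos, if_pos h]; exact ⟨this, h.1, h.2⟩
    · rw [if_neg, if_neg h]; intro hc; exact h ⟨hc.2.1, hc.2.2⟩
  have e3 : ∑ x ∈ s, (if o < x.2 ∧ x.2 < d then (1:ℕ) else 0)
      = (s.filter fun e => o < e.2 ∧ e.2 < d).card := (Finset.card_filter _ _).symm
  rw [Finset.sum_congr rfl e2, Finset.sum_add_distrib, e1, e3, if_neg]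
  · omega
  · omega

lemma neStat_insert (s : Finset (ℕ × ℕ)) (o d : ℕ) (hbd : ∀ e ∈ s, e.1 < o) :
    neStat (insert (o,d) s) = neStat s + (s.filter fun e => d < e.2).card := by
  have hnot : (o,d) ∉ s := fun h => lt_irrefl o (hbd _ h)
  rw [neStat_sum, neStat_sum, Finset.sum_insert hnot]
  simp only [Finset.sum_insert hnot]
  have e1 : ∑ b ∈ s, (if (o,d).1 < b.1 ∧ b.2 < (o,d).2 then (1:ℕ) else 0) = 0 :=
    Finset.sum_eq_zero fun b hb => by
      have := hbd b hb; rw [if_neg]; simp only; omega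
  have e2 : ∀ a ∈ s, (if a.1 < (o,d).1 ∧ (o,d).2 < a.2 then (1:ℕ) else 0)
      + ∑ b ∈ s, (if a.1 < b.1 ∧ b.2 < a.2 then (1:ℕ) else 0)
      = (if d < a.2 then (1:ℕ) else 0)
      + ∑ b ∈ s, (if a.1 < b.1 ∧ b.2 < a.2 then (1:ℕ) else 0) := by
    intro a ha
    congr 1
    have := hbd a ha
    by_cases h : d < a.2
    · rw [if_pos, if_pos h]; exact ⟨this, h⟩
    · rw [if_neg, if_neg h]; intro hc; exact h hc.2
  have e3 : ∑ x ∈ s, (if d < x.2 then (1:ℕ) else 0)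
      = (s.filter fun e => d < e.2).card := (Finset.card_filter _ _).symm
  rw [Finset.sum_congr rfl e2, Finset.sum_add_distrib, e1, e3, if_neg]
  · omega
  · omega

namespace MatchAux

lemma eq_of_shared (V s) (hs : IsMatchingOn V s) {e f : ℕ × ℕ} (he : e ∈ s) (hf : f ∈ s)
    {v : ℕ} (hv1 : v = e.1 ∨ v = e.2) (hv2 : v = f.1 ∨ v = f.2) : e = f := by
  have hvV : v ∈ V := by
    rcases hv1 with h | h <;> subst h
    · exact ((hs.1 e he).1)
    · exact ((hs.1 e he).2.1)
  obtain ⟨g, -, hu⟩ := hs.2 v hvV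
  rw [hu e ⟨he, hv1⟩, hu f ⟨hf, hv2⟩]

/-- The count of arcs with second endpoint satisfying `Q` equals the count of
vertices satisfying `Q`, provided `Q`-vertices exceed all first endpoints. -/
lemma card_filter_snd (V : Finset ℕ) (s : Finset (ℕ × ℕ)) (hs : IsMatchingOn V s)
    (o : ℕ) (hbd : ∀ e ∈ s, e.1 < o) (Q : ℕ → Prop) (hQ : ∀ x, Q x → o ≤ x) :
    (s.filter fun e => Q e.2).card = (V.filter Q).card := by
  apply Finset.card_bij (fun e _ => e.2)
  · intro e he
    rw [Finset.mem_filter] at he ⊢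
    exact ⟨(hs.1 e he.1).2.1, he.2⟩
  · intro e1 h1 e2 h2 h
    rw [Finset.mem_filter] at h1 h2
    exact eq_of_shared V s hs h1.1 h2.1 (Or.inr rfl) (Or.inr h)
  · intro x hx
    rw [Finset.mem_filter] at hx
    obtain ⟨e, ⟨hes, hxe⟩, -⟩ := hs.2 x hx.1
    rcases hxe with h | h
    · exact absurd (hQ x hx.2) (by have := hbd e hes; omega)
    · refine ⟨e, ?_, h.symm⟩
      rw [Finset.mem_filter]
      exact ⟨hes, h ▸ hx.2⟩

lemma isMatchingOn_insert (V : Finset ℕ) (s : Finset (ℕ × ℕ)) {o d : ℕ}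
    (ho : o ∈ V) (hd : d ∈ V) (hod : o < d)
    (hs : IsMatchingOn ((V.erase o).erase d) s) (hbd : ∀ e ∈ s, e.1 < o) :
    IsMatchingOn V (insert (o,d) s) := by
  constructor
  · intro e he
    rcases Finset.mem_insert.mp he with rfl | he'
    · exact ⟨ho, hd, hod⟩
    · obtain ⟨h1, h2, h3⟩ := hs.1 e he'
      exact ⟨Finset.mem_of_mem_erase (Finset.mem_of_mem_erase h1),
        Finset.mem_of_mem_erase (Finset.mem_of_mem_erase h2), h3⟩
  · intro v hv
    by_cases hvod : v = o ∨ v = d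
    · refine ⟨(o,d), ⟨Finset.mem_insert_self _ _, hvod⟩, ?_⟩
      rintro e ⟨he, hve⟩
      rcases Finset.mem_insert.mp he with rfl | he'
      · rfl
      · exfalso
        obtain ⟨h1, h2, h3⟩ := hs.1 e he'
        rw [Finset.mem_erase, Finset.mem_erase] at h1 h2
        have := hbd e he'
        rcases hvod with rfl | rfl <;> rcases hve with h | h <;> omega
    · push_neg at hvod
      have hv' : v ∈ (V.erase o).erase d :=
        Finset.mem_erase.mpr ⟨hvod.2, Finset.mem_erase.mpr ⟨hvod.1, hv⟩⟩
      obtain ⟨e, ⟨hes, hve⟩, hu⟩ := hs.2 v hv'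
      refine ⟨e, ⟨Finset.mem_insert_of_mem hes, hve⟩, ?_⟩
      rintro f ⟨hf, hvf⟩
      rcases Finset.mem_insert.mp hf with rfl | hf'
      · exfalso; rcases hvf with h | h
        · exact hvod.1 h
        · exact hvod.2 h
      · exact hu f ⟨hf', hvf⟩

lemma isMatchingOn_erase (V : Finset ℕ) (s : Finset (ℕ × ℕ)) {o d : ℕ}
    (hs : IsMatchingOn V s) (hmem : (o,d) ∈ s) :
    IsMatchingOn ((V.erase o).erase d) (s.erase (o,d)) := by
  constructor
  · intro e he
    have hes := Finset.mem_of_mem_erase he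
    have hne := Finset.ne_of_mem_erase he
    obtain ⟨h1, h2, h3⟩ := hs.1 e hes
    have k1 : e.1 ≠ o := fun h =>
      hne (eq_of_shared V s hs hes hmem (Or.inl h.symm) (Or.inl rfl))
    have k2 : e.1 ≠ d := fun h =>
      hne (eq_of_shared V s hs hes hmem (Or.inl h.symm) (Or.inr rfl))
    have k3 : e.2 ≠ o := fun h =>
      hne (eq_of_shared V s hs hes hmem (Or.inr h.symm) (Or.inl rfl))
    have k4 : e.2 ≠ d := fun h =>
      hne (eq_of_shared V s hs hes hmem (Or.inr h.symm) (Or.inr rfl))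
    exact ⟨Finset.mem_erase.mpr ⟨k2, Finset.mem_erase.mpr ⟨k1, h1⟩⟩,
      Finset.mem_erase.mpr ⟨k4, Finset.mem_erase.mpr ⟨k3, h2⟩⟩, h3⟩
  · intro v hv
    rw [Finset.mem_erase, Finset.mem_erase] at hv
    obtain ⟨hvd, hvo, hvV⟩ := hv
    obtain ⟨e, ⟨hes, hve⟩, hu⟩ := hs.2 v hvV
    have hneq : e ≠ (o,d) := by
      rintro rfl
      rcases hve with h | h
      · exact hvo h
      · exact hvd h
    refine ⟨e, ⟨Finset.mem_erase.mpr ⟨hneq, hes⟩, hve⟩, ?_⟩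
    rintro f ⟨hf, hvf⟩
    exact hu f ⟨Finset.mem_of_mem_erase hf, hvf⟩

lemma exists_max_opener (V : Finset ℕ) (s : Finset (ℕ × ℕ)) (hs : IsMatchingOn V s)
    (hV : V.Nonempty) : ∃ o d, (o,d) ∈ s ∧ (∀ e ∈ s, e.1 ≤ o) := by
  obtain ⟨v, hv⟩ := hV
  obtain ⟨e0, ⟨he0, -⟩, -⟩ := hs.2 v hv
  have hne : (s.image Prod.fst).Nonempty := ⟨e0.1, Finset.mem_image_of_mem _ he0⟩
  obtain ⟨e, hes, he1⟩ := Finset.mem_image.mp ((s.image Prod.fst).max'_mem hne)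
  refine ⟨e.1, e.2, by simpa using hes, fun f hf => ?_⟩
  rw [he1]
  exact Finset.le_max' _ _ (Finset.mem_image_of_mem _ hf)

lemma two_mul_card (V : Finset ℕ) (s : Finset (ℕ × ℕ)) (hs : IsMatchingOn V s) :
    2 * s.card = V.card := by
  have hV : V = s.biUnion (fun e => {e.1, e.2}) := by
    ext v
    simp only [Finset.mem_biUnion, Finset.mem_insert, Finset.mem_singleton]
    constructor
    · intro hv
      obtain ⟨e, ⟨hes, hve⟩, -⟩ := hs.2 v hv
      exact ⟨e, hes, hve⟩
    · rintro ⟨e, hes, h | h⟩ <;> subst h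
      · exact (hs.1 e hes).1
      · exact (hs.1 e hes).2.1
  rw [hV, Finset.card_biUnion, Finset.sum_congr rfl
    (fun e he => show ({e.1, e.2} : Finset ℕ).card = 2 from
      Finset.card_pair (Nat.ne_of_lt (hs.1 e he).2.2)), Finset.sum_const, smul_eq_mul,
    mul_comm]
  intro e he f hf hne
  rw [Function.onFun, Finset.disjoint_left]
  intro v hv1 hv2
  simp only [Finset.mem_insert, Finset.mem_singleton] at hv1 hv2
  exact hne (eq_of_shared V s hs he hf hv1 hv2)



section Image

variable (V : Finset ℕ) (φ : ℕ → ℕ)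

lemma lt_iff_of_mono (hmono : ∀ a ∈ V, ∀ c ∈ V, a < c → φ a < φ c)
    {a c : ℕ} (ha : a ∈ V) (hc : c ∈ V) : a < c ↔ φ a < φ c := by
  constructor
  · exact hmono a ha c hc
  · intro h
    rcases lt_trichotomy a c with h' | rfl | h'
    · exact h'
    · omega
    · exact absurd (hmono c hc a ha h') (by omega)

lemma injOn_of_mono (hmono : ∀ a ∈ V, ∀ c ∈ V, a < c → φ a < φ c)
    {a c : ℕ} (ha : a ∈ V) (hc : c ∈ V) (h : φ a = φ c) : a = c := by
  rcases lt_trichotomy a c with h' | h' | h'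
  · exact absurd (hmono a ha c hc h') (by omega)
  · exact h'
  · exact absurd (hmono c hc a ha h') (by omega)

lemma crStat_image (hmono : ∀ a ∈ V, ∀ c ∈ V, a < c → φ a < φ c)
    (s : Finset (ℕ × ℕ)) (hs : ∀ e ∈ s, e.1 ∈ V ∧ e.2 ∈ V ∧ e.1 < e.2) :
    crStat (s.image (Prod.map φ φ)) = crStat s := by
  have hinj : ∀ x ∈ s, ∀ y ∈ s, Prod.map φ φ x = Prod.map φ φ y → x = y := by
    intro x hx y hy h
    rw [Prod.ext_iff] at h ⊢
    obtain ⟨hx1, hx2, -⟩ := hs x hx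
    obtain ⟨hy1, hy2, -⟩ := hs y hy
    exact ⟨injOn_of_mono V φ hmono hx1 hy1 h.1, injOn_of_mono V φ hmono hx2 hy2 h.2⟩
  rw [crStat_sum, crStat_sum, Finset.sum_image hinj]
  refine Finset.sum_congr rfl fun a ha => ?_
  rw [Finset.sum_image hinj]
  refine Finset.sum_congr rfl fun b hb => ?_
  obtain ⟨ha1, ha2, -⟩ := hs a ha
  obtain ⟨hb1, hb2, -⟩ := hs b hb
  congr 1
  rw [eq_iff_iff]
  simp only [Prod.map_fst, Prod.map_snd]
  rw [← lt_iff_of_mono V φ hmono ha1 hb1, ← lt_iff_of_mono V φ hmono hb1 ha2,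
    ← lt_iff_of_mono V φ hmono ha2 hb2]

lemma neStat_image (hmono : ∀ a ∈ V, ∀ c ∈ V, a < c → φ a < φ c)
    (s : Finset (ℕ × ℕ)) (hs : ∀ e ∈ s, e.1 ∈ V ∧ e.2 ∈ V ∧ e.1 < e.2) :
    neStat (s.image (Prod.map φ φ)) = neStat s := by
  have hinj : ∀ x ∈ s, ∀ y ∈ s, Prod.map φ φ x = Prod.map φ φ y → x = y := by
    intro x hx y hy h
    rw [Prod.ext_iff] at h ⊢
    obtain ⟨hx1, hx2, -⟩ := hs x hx
    obtain ⟨hy1, hy2, -⟩ := hs y hy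
    exact ⟨injOn_of_mono V φ hmono hx1 hy1 h.1, injOn_of_mono V φ hmono hx2 hy2 h.2⟩
  rw [neStat_sum, neStat_sum, Finset.sum_image hinj]
  refine Finset.sum_congr rfl fun a ha => ?_
  rw [Finset.sum_image hinj]
  refine Finset.sum_congr rfl fun b hb => ?_
  obtain ⟨ha1, ha2, -⟩ := hs a ha
  obtain ⟨hb1, hb2, -⟩ := hs b hb
  congr 1
  rw [eq_iff_iff]
  simp only [Prod.map_fst, Prod.map_snd]
  rw [← lt_iff_of_mono V φ hmono ha1 hb1, ← lt_iff_of_mono V φ hmono hb2 ha2]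

lemma isMatchingOn_image (W : Finset ℕ) (himg : V.image φ = W)
    (hmono : ∀ a ∈ V, ∀ c ∈ V, a < c → φ a < φ c)
    (s : Finset (ℕ × ℕ)) (hs : IsMatchingOn V s) :
    IsMatchingOn W (s.image (Prod.map φ φ)) := by
  constructor
  · intro e' he'
    obtain ⟨e, he, rfl⟩ := Finset.mem_image.mp he'
    obtain ⟨h1, h2, h3⟩ := hs.1 e he
    subst himg
    exact ⟨Finset.mem_image_of_mem _ h1, Finset.mem_image_of_mem _ h2,
      hmono _ h1 _ h2 h3⟩
  · intro w hw
    subst himg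
    obtain ⟨v, hv, rfl⟩ := Finset.mem_image.mp hw
    obtain ⟨e, ⟨hes, hve⟩, hu⟩ := hs.2 v hv
    refine ⟨Prod.map φ φ e, ⟨Finset.mem_image_of_mem _ hes, ?_⟩, ?_⟩
    · rcases hve with h | h
      · exact Or.inl (by rw [h]; rfl)
      · exact Or.inr (by rw [h]; rfl)
    · rintro f' ⟨hf', hvf'⟩
      obtain ⟨f, hf, rfl⟩ := Finset.mem_image.mp hf'
      obtain ⟨hf1, hf2, -⟩ := hs.1 f hf
      have : f = e := by
        apply hu
        refine ⟨hf, ?_⟩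
        rcases hvf' with h | h
        · exact Or.inl (injOn_of_mono V φ hmono hv hf1 h)
        · exact Or.inr (injOn_of_mono V φ hmono hv hf2 h)
      rw [this]

lemma image_roundtrip (ψ : ℕ → ℕ) (hψφ : ∀ v ∈ V, ψ (φ v) = v)
    (s : Finset (ℕ × ℕ)) (hs : ∀ e ∈ s, e.1 ∈ V ∧ e.2 ∈ V) :
    (s.image (Prod.map φ φ)).image (Prod.map ψ ψ) = s := by
  rw [Finset.image_image]
  have : ∀ e ∈ s, (Prod.map ψ ψ ∘ Prod.map φ φ) e = id e := by
    intro e he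
    obtain ⟨h1, h2⟩ := hs e he
    simp only [Function.comp_apply, Prod.map_apply, id_eq]
    rw [Prod.ext_iff]
    exact ⟨hψφ _ h1, hψφ _ h2⟩
  rw [Finset.image_congr this, Finset.image_id]

end Image

lemma cnt_transfer (f : Finset (ℕ × ℕ) → ℕ)
    (hf : ∀ (U : Finset ℕ) (φ : ℕ → ℕ), (∀ a ∈ U, ∀ c ∈ U, a < c → φ a < φ c) →
      ∀ s, (∀ e ∈ s, e.1 ∈ U ∧ e.2 ∈ U ∧ e.1 < e.2) →
        f (s.image (Prod.map φ φ)) = f s)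
    (V W : Finset ℕ) (bV bW : ℕ) (φ : ℕ → ℕ) (himg : V.image φ = W)
    (hmono : ∀ a ∈ V, ∀ c ∈ V, a < c → φ a < φ c)
    (hb : ∀ v ∈ V, (v < bV ↔ φ v < bW)) (t : ℕ → Prop) :
    cnt V bV f t = cnt W bW f t := by
  classical
  -- construct the inverse map ψ
  set ψ : ℕ → ℕ := fun w => if h : ∃ v ∈ V, φ v = w then h.choose else 0 with hψdef
  have hψspec : ∀ w ∈ W, ψ w ∈ V ∧ φ (ψ w) = w := by
    intro w hw
    rw [← himg] at hw
    obtain ⟨v, hv, rfl⟩ := Finset.mem_image.mp hw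
    have h : ∃ v' ∈ V, φ v' = φ v := ⟨v, hv, rfl⟩
    simp only [hψdef, dif_pos h]
    exact ⟨h.choose_spec.1, h.choose_spec.2⟩
  have hψφ : ∀ v ∈ V, ψ (φ v) = v := by
    intro v hv
    have hw : φ v ∈ W := by rw [← himg]; exact Finset.mem_image_of_mem _ hv
    obtain ⟨h1, h2⟩ := hψspec _ hw
    exact injOn_of_mono V φ hmono h1 hv h2
  have hψmono : ∀ a ∈ W, ∀ c ∈ W, a < c → ψ a < ψ c := by
    intro a ha c hc h
    obtain ⟨ha1, ha2⟩ := hψspec a ha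
    obtain ⟨hc1, hc2⟩ := hψspec c hc
    by_contra hcon
    push_neg at hcon
    rcases Nat.lt_or_ge (ψ c) (ψ a) with h' | h'
    · have := hmono _ hc1 _ ha1 h'; omega
    · have : ψ a = ψ c := by omega
      rw [← ha2, ← hc2, this] at h; omega
  have himg' : W.image ψ = V := by
    apply Finset.eq_of_subset_of_card_le
    · intro v hv
      obtain ⟨w, hw, rfl⟩ := Finset.mem_image.mp hv
      exact (hψspec w hw).1
    · have h1 : W.card = V.card := by
        rw [← himg]
        rw [Finset.card_image_of_injOn
          (fun a ha c hc h => injOn_of_mono V φ hmono (Finset.mem_coe.mp ha) (Finset.mem_coe.mp hc) h)]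
      rw [Finset.card_image_of_injOn
        (fun a ha c hc h => injOn_of_mono W ψ hψmono (Finset.mem_coe.mp ha) (Finset.mem_coe.mp hc) h), h1]
  have hφψ : ∀ w ∈ W, φ (ψ w) = w := fun w hw => (hψspec w hw).2
  have hb' : ∀ w ∈ W, (w < bW ↔ ψ w < bV) := by
    intro w hw
    obtain ⟨h1, h2⟩ := hψspec w hw
    rw [hb _ h1, h2]
  unfold cnt
  apply Finset.card_bij (fun s _ => s.image (Prod.map φ φ))
  · intro s hsmem
    rw [Finset.mem_filter] at hsmem ⊢
    obtain ⟨hpow, hM, hB, ht⟩ := hsmem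
    refine ⟨?_, isMatchingOn_image V φ W himg hmono s hM, ?_, ?_⟩
    · rw [Finset.mem_powerset]
      intro e' he'
      obtain ⟨e, he, rfl⟩ := Finset.mem_image.mp he'
      obtain ⟨h1, h2, -⟩ := hM.1 e he
      rw [Finset.mem_product]
      exact ⟨himg ▸ Finset.mem_image_of_mem _ h1, himg ▸ Finset.mem_image_of_mem _ h2⟩
    · intro e' he'
      obtain ⟨e, he, rfl⟩ := Finset.mem_image.mp he'
      exact (hb _ (hM.1 e he).1).mp (hB e he)
    · rwa [hf V φ hmono s hM.1]
  · intro s1 h1' s2 h2' heq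
    rw [Finset.mem_filter] at h1' h2'
    have r1 := image_roundtrip V φ ψ hψφ s1 (fun e he => ⟨(h1'.2.1.1 e he).1, (h1'.2.1.1 e he).2.1⟩)
    have r2 := image_roundtrip V φ ψ hψφ s2 (fun e he => ⟨(h2'.2.1.1 e he).1, (h2'.2.1.1 e he).2.1⟩)
    rw [← r1, ← r2, heq]
  · intro s2 hs2
    rw [Finset.mem_filter] at hs2
    obtain ⟨hpow, hM, hB, ht⟩ := hs2
    refine ⟨s2.image (Prod.map ψ ψ), ?_, ?_⟩
    · rw [Finset.mem_filter]
      refine ⟨?_, isMatchingOn_image W ψ V himg' hψmono s2 hM, ?_, ?_⟩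
      · rw [Finset.mem_powerset]
        intro e' he'
        obtain ⟨e, he, rfl⟩ := Finset.mem_image.mp he'
        obtain ⟨h1, h2, -⟩ := hM.1 e he
        rw [Finset.mem_product]
        exact ⟨himg' ▸ Finset.mem_image_of_mem _ h1, himg' ▸ Finset.mem_image_of_mem _ h2⟩
      · intro e' he'
        obtain ⟨e, he, rfl⟩ := Finset.mem_image.mp he'
        exact (hb' _ (hM.1 e he).1).mp (hB e he)
      · rwa [hf W ψ hψmono s2 hM.1]
    · exact image_roundtrip W ψ φ hφψ s2 (fun e he => ⟨(hM.1 e he).1, (hM.1 e he).2.1⟩)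


lemma cnt_norm (f : Finset (ℕ × ℕ) → ℕ)
    (hf : ∀ (U : Finset ℕ) (φ : ℕ → ℕ), (∀ a ∈ U, ∀ c ∈ U, a < c → φ a < φ c) →
      ∀ s, (∀ e ∈ s, e.1 ∈ U ∧ e.2 ∈ U ∧ e.1 < e.2) →
        f (s.image (Prod.map φ φ)) = f s)
    (V : Finset ℕ) (b : ℕ) (t : ℕ → Prop) :
    cnt V b f t = cnt (range V.card) ((V.filter (· < b)).card) f t := by
  set φ : ℕ → ℕ := fun v => (V.filter (· < v)).card with hφ
  have hmono : ∀ a ∈ V, ∀ c ∈ V, a < c → φ a < φ c := by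
    intro a ha c hc h
    apply Finset.card_lt_card
    rw [Finset.ssubset_iff_of_subset]
    · refine ⟨a, ?_, ?_⟩
      · rw [Finset.mem_filter]; exact ⟨ha, h⟩
      · rw [Finset.mem_filter]; push_neg; intro; omega
    · intro x hx
      rw [Finset.mem_filter] at hx ⊢
      exact ⟨hx.1, by omega⟩
  have himg : V.image φ = range V.card := by
    apply Finset.eq_of_subset_of_card_le
    · intro x hx
      obtain ⟨v, hv, rfl⟩ := Finset.mem_image.mp hx
      rw [Finset.mem_range]
      apply Finset.card_lt_card
      rw [Finset.ssubset_iff_of_subset (Finset.filter_subset _ _)]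
      refine ⟨v, hv, ?_⟩
      rw [Finset.mem_filter]; push_neg; intro; omega
    · rw [Finset.card_range, Finset.card_image_of_injOn
        (fun a ha c hc h => injOn_of_mono V φ hmono (Finset.mem_coe.mp ha) (Finset.mem_coe.mp hc) h)]
  have hb : ∀ v ∈ V, (v < b ↔ φ v < (V.filter (· < b)).card) := by
    intro v hv
    constructor
    · intro h
      apply Finset.card_lt_card
      rw [Finset.ssubset_iff_of_subset]
      · refine ⟨v, ?_, ?_⟩
        · rw [Finset.mem_filter]; exact ⟨hv, h⟩
        · rw [Finset.mem_filter]; push_neg; intro; omega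
      · intro x hx
        rw [Finset.mem_filter] at hx ⊢
        exact ⟨hx.1, by omega⟩
    · intro h
      by_contra hcon
      push_neg at hcon
      have hsub : V.filter (· < b) ⊆ V.filter (· < v) := by
        intro x hx
        rw [Finset.mem_filter] at hx ⊢
        exact ⟨hx.1, by omega⟩
      have := Finset.card_le_card hsub
      simp only [hφ] at h
      omega
  exact cnt_transfer f hf V (range V.card) b ((V.filter (· < b)).card) φ himg hmono hb t

lemma cnt_pred_congr (V : Finset ℕ) (b : ℕ) (f : Finset (ℕ × ℕ) → ℕ) (t1 t2 : ℕ → Prop)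
    (h : ∀ m, t1 m ↔ t2 m) : cnt V b f t1 = cnt V b f t2 := by
  have : t1 = t2 := funext fun m => propext (h m)
  rw [this]

lemma cnt_false (V : Finset ℕ) (b : ℕ) (f : Finset (ℕ × ℕ) → ℕ) (t : ℕ → Prop)
    (h : ∀ m, ¬ t m) : cnt V b f t = 0 := by
  unfold cnt
  rw [Finset.card_eq_zero, Finset.filter_eq_empty_iff]
  rintro s - ⟨-, -, ht⟩
  exact h _ ht

lemma hDelta_cr (V : Finset ℕ) (o d : ℕ) (s : Finset (ℕ × ℕ)) (ho : o ∈ V) (hd : d ∈ V)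
    (hod : o < d) (hM : IsMatchingOn ((V.erase o).erase d) s) (hbd : ∀ e ∈ s, e.1 < o) :
    crStat (insert (o,d) s)
      = crStat s + ((V.filter (fun x => o < x)).filter (fun x => x < d)).card := by
  rw [crStat_insert s o d hbd]
  congr 1
  apply Finset.card_bij (fun e _ => e.2)
  · intro e he
    rw [Finset.mem_filter] at he
    obtain ⟨h1, h2, h3⟩ := hM.1 e he.1
    rw [Finset.mem_erase, Finset.mem_erase] at h2
    rw [Finset.mem_filter, Finset.mem_filter]
    exact ⟨⟨h2.2.2, he.2.1⟩, he.2.2⟩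
  · intro e1 h1 e2 h2 h
    rw [Finset.mem_filter] at h1 h2
    exact eq_of_shared _ s hM h1.1 h2.1 (Or.inr rfl) (Or.inr h)
  · intro x hx
    rw [Finset.mem_filter, Finset.mem_filter] at hx
    obtain ⟨⟨hxV, hox⟩, hxd⟩ := hx
    have hx' : x ∈ (V.erase o).erase d := by
      rw [Finset.mem_erase, Finset.mem_erase]
      exact ⟨by omega, by omega, hxV⟩
    obtain ⟨e, ⟨hes, hxe⟩, -⟩ := hM.2 x hx'
    rcases hxe with h | h
    · exact absurd (hbd e hes) (by omega)
    · refine ⟨e, ?_, h.symm⟩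
      rw [Finset.mem_filter]
      exact ⟨hes, by omega, by omega⟩

lemma hDelta_ne (V : Finset ℕ) (o d : ℕ) (s : Finset (ℕ × ℕ)) (ho : o ∈ V) (hd : d ∈ V)
    (hod : o < d) (hM : IsMatchingOn ((V.erase o).erase d) s) (hbd : ∀ e ∈ s, e.1 < o) :
    neStat (insert (o,d) s)
      = neStat s + ((V.filter (fun x => o < x)).filter (fun x => d < x)).card := by
  rw [neStat_insert s o d hbd]
  congr 1
  apply Finset.card_bij (fun e _ => e.2)
  · intro e he
    rw [Finset.mem_filter] at he
    obtain ⟨h1, h2, h3⟩ := hM.1 e he.1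
    rw [Finset.mem_erase, Finset.mem_erase] at h2
    rw [Finset.mem_filter, Finset.mem_filter]
    have := hbd e he.1
    exact ⟨⟨h2.2.2, by omega⟩, he.2⟩
  · intro e1 h1 e2 h2 h
    rw [Finset.mem_filter] at h1 h2
    exact eq_of_shared _ s hM h1.1 h2.1 (Or.inr rfl) (Or.inr h)
  · intro x hx
    rw [Finset.mem_filter, Finset.mem_filter] at hx
    obtain ⟨⟨hxV, hox⟩, hdx⟩ := hx
    have hx' : x ∈ (V.erase o).erase d := by
      rw [Finset.mem_erase, Finset.mem_erase]
      exact ⟨by omega, by omega, hxV⟩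
    obtain ⟨e, ⟨hes, hxe⟩, -⟩ := hM.2 x hx'
    rcases hxe with h | h
    · exact absurd (hbd e hes) (by omega)
    · refine ⟨e, ?_, h.symm⟩
      rw [Finset.mem_filter]
      exact ⟨hes, h ▸ hdx⟩

lemma cnt_decomp (f : Finset (ℕ × ℕ) → ℕ) (Δ : Finset ℕ → ℕ → ℕ → ℕ)
    (hΔ : ∀ (V : Finset ℕ) (o d : ℕ) (s : Finset (ℕ × ℕ)), o ∈ V → d ∈ V → o < d →
      IsMatchingOn ((V.erase o).erase d) s → (∀ e ∈ s, e.1 < o) →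
      f (insert (o,d) s) = f s + Δ V o d)
    (V : Finset ℕ) (hV : V.Nonempty) (b : ℕ) (t : ℕ → Prop) :
    cnt V b f t = ∑ o ∈ V.filter (· < b), ∑ d ∈ V.filter (fun x => o < x),
      cnt ((V.erase o).erase d) o f (fun m => t (m + Δ V o d)) := by
  set B : ℕ → ℕ → Finset (Finset (ℕ × ℕ)) := fun o d =>
    ((((V.erase o).erase d) ×ˢ ((V.erase o).erase d)).powerset.filter fun s =>
      IsMatchingOn ((V.erase o).erase d) s ∧ Bdd o s ∧ t (f s + Δ V o d)) with hB
  have hBmem : ∀ o d s', s' ∈ B o d ↔ (s' ⊆ ((V.erase o).erase d) ×ˢ ((V.erase o).erase d) ∧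
      IsMatchingOn ((V.erase o).erase d) s' ∧ Bdd o s' ∧ t (f s' + Δ V o d)) := by
    intro o d s'
    rw [hB]
    simp only [Finset.mem_filter, Finset.mem_powerset]
  -- membership characterisation of the image sets
  have hchar : ∀ o d s', o ∈ V → d ∈ V → o < d → s' ∈ B o d →
      IsMatchingOn V (insert (o,d) s') ∧ (∀ e ∈ insert (o,d) s', e.1 ≤ o) := by
    intro o d s' hoV hdV hod hs'
    obtain ⟨hsub', hM', hbd', ht'⟩ := (hBmem o d s').mp hs'
    refine ⟨isMatchingOn_insert V s' hoV hdV hod hM' hbd', ?_⟩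
    intro e he
    rcases Finset.mem_insert.mp he with rfl | he'
    · exact le_refl o
    · exact le_of_lt (hbd' e he')
  have hset : ((V ×ˢ V).powerset.filter fun s => IsMatchingOn V s ∧ Bdd b s ∧ t (f s))
      = (V.filter (· < b)).biUnion (fun o => (V.filter (fun x => o < x)).biUnion
          (fun d => (B o d).image (insert (o,d)))) := by
    ext s
    simp only [Finset.mem_biUnion, Finset.mem_image, Finset.mem_filter, Finset.mem_powerset]
    constructor
    · rintro ⟨hsub, hM, hBdd, ht⟩
      obtain ⟨o, d, hods, hmax⟩ := exists_max_opener V s hM hV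
      have hoV : o ∈ V := (hM.1 _ hods).1
      have hdV : d ∈ V := (hM.1 _ hods).2.1
      have hod : o < d := (hM.1 _ hods).2.2
      have hob : o < b := hBdd _ hods
      refine ⟨o, ⟨hoV, hob⟩, d, ⟨hdV, hod⟩, s.erase (o,d), ?_, Finset.insert_erase hods⟩
      have hM' := isMatchingOn_erase V s hM hods
      have hbd' : ∀ e ∈ s.erase (o,d), e.1 < o := by
        intro e he
        have hle := hmax e (Finset.mem_of_mem_erase he)
        rcases eq_or_lt_of_le hle with h | h
        · exact absurd (eq_of_shared V s hM (Finset.mem_of_mem_erase he) hods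
            (Or.inl h.symm) (Or.inl rfl)) (Finset.ne_of_mem_erase he)
        · exact h
      have hfs : f s = f (s.erase (o,d)) + Δ V o d := by
        conv_lhs => rw [← Finset.insert_erase hods]
        exact hΔ V o d _ hoV hdV hod hM' hbd'
      rw [hBmem]
      refine ⟨?_, hM', hbd', by rw [← hfs]; exact ht⟩
      intro e he
      obtain ⟨h1, h2, -⟩ := hM'.1 e he
      exact Finset.mem_product.mpr ⟨h1, h2⟩
    · rintro ⟨o, ⟨hoV, hob⟩, d, ⟨hdV, hod⟩, s', hs', rfl⟩
      obtain ⟨hsub', hM', hbd', ht'⟩ := (hBmem o d s').mp hs'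
      have hMins := isMatchingOn_insert V s' hoV hdV hod hM' hbd'
      refine ⟨?_, hMins, ?_, ?_⟩
      · intro e he
        rcases Finset.mem_insert.mp he with rfl | he'
        · exact Finset.mem_product.mpr ⟨hoV, hdV⟩
        · obtain ⟨h1, h2, -⟩ := hM'.1 e he'
          exact Finset.mem_product.mpr
            ⟨Finset.mem_of_mem_erase (Finset.mem_of_mem_erase h1),
             Finset.mem_of_mem_erase (Finset.mem_of_mem_erase h2)⟩
      · intro e he
        rcases Finset.mem_insert.mp he with rfl | he'
        · exact hob
        · have := hbd' e he'; omega
      · rw [hΔ V o d s' hoV hdV hod hM' hbd']; exact ht'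
  have hdisj2 : ∀ o ∈ V.filter (· < b), ∀ d1 ∈ V.filter (fun x => o < x),
      ∀ d2 ∈ V.filter (fun x => o < x), d1 ≠ d2 →
      Disjoint ((B o d1).image (insert (o,d1))) ((B o d2).image (insert (o,d2))) := by
    intro o ho d1 hd1 d2 hd2 hne
    rw [Finset.mem_filter] at ho hd1 hd2
    rw [Finset.disjoint_left]
    intro s hs1 hs2
    obtain ⟨s1', hs1', rfl⟩ := Finset.mem_image.mp hs1
    obtain ⟨s2', hs2', heq⟩ := Finset.mem_image.mp hs2
    obtain ⟨hM1, -⟩ := hchar o d1 s1' ho.1 hd1.1 hd1.2 hs1'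
    have hmem1 : (o, d1) ∈ insert (o,d1) s1' := Finset.mem_insert_self _ _
    have hmem2 : (o, d2) ∈ insert (o,d1) s1' := by
      rw [← heq]; exact Finset.mem_insert_self _ _
    have := eq_of_shared V _ hM1 hmem1 hmem2 (Or.inl rfl) (Or.inl rfl)
    exact hne (congrArg Prod.snd this)
  have hdisj1 : ∀ o1 ∈ V.filter (· < b), ∀ o2 ∈ V.filter (· < b), o1 ≠ o2 →
      Disjoint ((V.filter (fun x => o1 < x)).biUnion (fun d => (B o1 d).image (insert (o1,d))))
        ((V.filter (fun x => o2 < x)).biUnion (fun d => (B o2 d).image (insert (o2,d)))) := by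
    intro o1 ho1 o2 ho2 hne
    rw [Finset.mem_filter] at ho1 ho2
    rw [Finset.disjoint_left]
    intro s hs1 hs2
    obtain ⟨d1, hd1, hs1'⟩ := Finset.mem_biUnion.mp hs1
    obtain ⟨d2, hd2, hs2'⟩ := Finset.mem_biUnion.mp hs2
    rw [Finset.mem_filter] at hd1 hd2
    obtain ⟨s1', hm1, he1⟩ := Finset.mem_image.mp hs1'
    obtain ⟨s2', hm2, he2⟩ := Finset.mem_image.mp hs2'
    obtain ⟨hM1, hle1⟩ := hchar o1 d1 s1' ho1.1 hd1.1 hd1.2 hm1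
    obtain ⟨hM2, hle2⟩ := hchar o2 d2 s2' ho2.1 hd2.1 hd2.2 hm2
    have h1 : (o1, d1) ∈ s := by rw [← he1]; exact Finset.mem_insert_self _ _
    have h2 : (o2, d2) ∈ s := by rw [← he2]; exact Finset.mem_insert_self _ _
    have hle12 : o2 ≤ o1 := by
      have := hle1 (o2, d2) (by rw [he1]; exact h2)
      exact this
    have hle21 : o1 ≤ o2 := by
      have := hle2 (o1, d1) (by rw [he2]; exact h1)
      exact this
    omega
  have hinj : ∀ o d, o < d → ∀ s1 ∈ B o d, ∀ s2 ∈ B o d,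
      insert (o,d) s1 = insert (o,d) s2 → s1 = s2 := by
    intro o d hod s1 hs1 s2 hs2 h
    obtain ⟨-, -, hbd1, -⟩ := (hBmem o d s1).mp hs1
    obtain ⟨-, -, hbd2, -⟩ := (hBmem o d s2).mp hs2
    have h1 : (o,d) ∉ s1 := fun hc => absurd (hbd1 _ hc) (lt_irrefl o)
    have h2 : (o,d) ∉ s2 := fun hc => absurd (hbd2 _ hc) (lt_irrefl o)
    rw [← Finset.erase_insert h1, ← Finset.erase_insert h2, h]
  rw [cnt, hset, Finset.card_biUnion hdisj1]
  refine Finset.sum_congr rfl fun o ho => ?_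
  rw [Finset.card_biUnion (hdisj2 o ho)]
  refine Finset.sum_congr rfl fun d hd => ?_
  rw [Finset.mem_filter] at hd
  rw [Finset.card_image_of_injOn (fun s1 h1 s2 h2 h =>
    hinj o d hd.2 s1 (Finset.mem_coe.mp h1) s2 (Finset.mem_coe.mp h2) h)]
  rfl

lemma crStat_empty : crStat ∅ = 0 := by simp [crStat]

lemma neStat_empty : neStat ∅ = 0 := by simp [neStat]

lemma cnt_empty (b : ℕ) (f : Finset (ℕ × ℕ) → ℕ) (t : ℕ → Prop) :
    cnt ∅ b f t = if t (f ∅) then 1 else 0 := by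
  unfold cnt
  have h1 : ((∅ : Finset ℕ) ×ˢ (∅ : Finset ℕ)).powerset = {∅} := by
    rw [Finset.empty_product, Finset.powerset_empty]
  rw [h1, Finset.filter_singleton]
  have hM : IsMatchingOn ∅ (∅ : Finset (ℕ × ℕ)) := by
    constructor
    · intro e he; exact absurd he (Finset.notMem_empty e)
    · intro v hv; exact absurd hv (Finset.notMem_empty v)
  have hBdd : Bdd b (∅ : Finset (ℕ × ℕ)) := fun e he => absurd he (Finset.notMem_empty e)
  by_cases ht : t (f ∅)
  · rw [if_pos ⟨hM, hBdd, ht⟩, if_pos ht, Finset.card_singleton]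
  · rw [if_neg (fun hc => ht hc.2.2), if_neg ht, Finset.card_empty]

lemma cnt_main : ∀ (N : ℕ) (V : Finset ℕ), V.card ≤ N → ∀ (b k : ℕ),
    cnt V b crStat (fun m => m = k) = cnt V b neStat (fun m => m = k) := by
  intro N
  induction N with
  | zero =>
    intro V hV b k
    have : V = ∅ := Finset.card_eq_zero.mp (le_antisymm hV (Nat.zero_le _))
    subst this
    rw [cnt_empty, cnt_empty, crStat_empty, neStat_empty]
  | succ N ih =>
    intro V hV b k
    rcases Finset.eq_empty_or_nonempty V with rfl | hne
    · rw [cnt_empty, cnt_empty, crStat_empty, neStat_empty]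
    · have hfcr : ∀ (U : Finset ℕ) (φ : ℕ → ℕ), (∀ a ∈ U, ∀ c ∈ U, a < c → φ a < φ c) →
          ∀ s, (∀ e ∈ s, e.1 ∈ U ∧ e.2 ∈ U ∧ e.1 < e.2) →
            crStat (s.image (Prod.map φ φ)) = crStat s :=
        fun U φ hm s hs => crStat_image U φ hm s hs
      have hfne : ∀ (U : Finset ℕ) (φ : ℕ → ℕ), (∀ a ∈ U, ∀ c ∈ U, a < c → φ a < φ c) →
          ∀ s, (∀ e ∈ s, e.1 ∈ U ∧ e.2 ∈ U ∧ e.1 < e.2) →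
            neStat (s.image (Prod.map φ φ)) = neStat s :=
        fun U φ hm s hs => neStat_image U φ hm s hs
      rw [cnt_decomp crStat (fun V o d => ((V.filter (fun x => o < x)).filter (fun x => x < d)).card)
            hDelta_cr V hne b (fun m => m = k),
          cnt_decomp neStat (fun V o d => ((V.filter (fun x => o < x)).filter (fun x => d < x)).card)
            hDelta_ne V hne b (fun m => m = k)]
      refine Finset.sum_congr rfl fun o ho => ?_
      rw [Finset.mem_filter] at ho
      set D := V.filter (fun x => o < x) with hD
      -- facts about the erased sets, for d ∈ D
      have hdV : ∀ d ∈ D, d ∈ V ∧ o < d := by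
        intro d hd; rw [hD, Finset.mem_filter] at hd; exact hd
      have hcard : ∀ d ∈ D, ((V.erase o).erase d).card = V.card - 2 := by
        intro d hd
        obtain ⟨hd1, hd2⟩ := hdV d hd
        have hdm : d ∈ V.erase o := Finset.mem_erase.mpr ⟨by omega, hd1⟩
        rw [Finset.card_erase_of_mem hdm, Finset.card_erase_of_mem ho.1]
        omega
      have hbo : ∀ d ∈ D, (((V.erase o).erase d).filter (· < o)).card
          = (V.filter (· < o)).card := by
        intro d hd
        obtain ⟨hd1, hd2⟩ := hdV d hd
        congr 1
        ext x
        simp only [Finset.mem_filter, Finset.mem_erase]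
        constructor
        · rintro ⟨⟨-, -, h3⟩, h4⟩; exact ⟨h3, h4⟩
        · rintro ⟨h3, h4⟩; exact ⟨⟨by omega, by omega, h3⟩, h4⟩
      have hVcard : ∀ d ∈ D, V.card - 2 ≤ N := by
        intro d hd
        obtain ⟨hd1, hd2⟩ := hdV d hd
        have : 2 ≤ V.card := by
          have : ({o, d} : Finset ℕ) ⊆ V := by
            intro x hx
            rcases Finset.mem_insert.mp hx with rfl | hx
            · exact ho.1
            · rw [Finset.mem_singleton] at hx; subst hx; exact hd1
          have h2 := Finset.card_le_card this
          rw [Finset.card_pair (by omega : o ≠ d)] at h2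
          exact h2
        omega
      set g : ℕ → ℕ := fun j => cnt (range (V.card - 2)) ((V.filter (· < o)).card) neStat
        (fun m => m + j = k) with hg
      -- step 1: per-term IH plus normalisation, for the cr side
      have step1 : ∀ d ∈ D, cnt ((V.erase o).erase d) o crStat
          (fun m => m + ((D.filter (fun x => x < d)).card) = k)
          = g ((D.filter (fun x => x < d)).card) := by
        intro d hd
        set c := (D.filter (fun x => x < d)).card
        have hMcard : ((V.erase o).erase d).card ≤ N := by
          rw [hcard d hd]; exact hVcard d hd
        by_cases hk : c ≤ k
        · have e1 : cnt ((V.erase o).erase d) o crStat (fun m => m + c = k)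
              = cnt ((V.erase o).erase d) o crStat (fun m => m = k - c) :=
            cnt_pred_congr _ _ _ _ _ (by intro m; omega)
          have e2 : cnt ((V.erase o).erase d) o neStat (fun m => m = k - c)
              = cnt ((V.erase o).erase d) o neStat (fun m => m + c = k) :=
            cnt_pred_congr _ _ _ _ _ (by intro m; omega)
          rw [e1, ih _ hMcard, e2]
          rw [cnt_norm neStat hfne ((V.erase o).erase d) o (fun m => m + c = k),
            hcard d hd, hbo d hd, hg]
        · have e1 : cnt ((V.erase o).erase d) o crStat (fun m => m + c = k) = 0 :=
            cnt_false _ _ _ _ (by intro m; omega)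
          have e2 : g c = 0 := cnt_false _ _ _ _ (by intro m; omega)
          rw [e1, e2]
      have step2 : ∀ d ∈ D, cnt ((V.erase o).erase d) o neStat
          (fun m => m + ((D.filter (fun x => d < x)).card) = k)
          = g ((D.filter (fun x => d < x)).card) := by
        intro d hd
        rw [cnt_norm neStat hfne ((V.erase o).erase d) o _, hcard d hd, hbo d hd, hg]
      calc ∑ d ∈ D, cnt ((V.erase o).erase d) o crStat
            (fun m => m + ((D.filter (fun x => x < d)).card) = k)
          = ∑ d ∈ D, g ((D.filter (fun x => x < d)).card) := Finset.sum_congr rfl step1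
        _ = ∑ i ∈ range D.card, g i := sum_lower g D.card D rfl
        _ = ∑ d ∈ D, g ((D.filter (fun x => d < x)).card) := (sum_upper g D.card D rfl).symm
        _ = ∑ d ∈ D, cnt ((V.erase o).erase d) o neStat
            (fun m => m + ((D.filter (fun x => d < x)).card) = k) :=
            (Finset.sum_congr rfl step2).symm

lemma isMatching_iff (n : ℕ) (s : Finset (ℕ × ℕ)) :
    IsMatching n s ↔ (s ∈ ((Finset.Icc 1 (2*n)) ×ˢ (Finset.Icc 1 (2*n))).powerset ∧
      IsMatchingOn (Finset.Icc 1 (2*n)) s ∧ Bdd (2*n+1) s) := by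
  constructor
  · rintro ⟨hcard, hbnd, huniq⟩
    have hend : ∀ e ∈ s, e.1 ∈ Finset.Icc 1 (2*n) ∧ e.2 ∈ Finset.Icc 1 (2*n) ∧ e.1 < e.2 := by
      intro e he
      obtain ⟨h1, h2, h3⟩ := hbnd e he
      exact ⟨Finset.mem_Icc.mpr ⟨h2, by omega⟩, Finset.mem_Icc.mpr ⟨by omega, h3⟩, h1⟩
    refine ⟨?_, ⟨hend, ?_⟩, ?_⟩
    · rw [Finset.mem_powerset]
      intro e he
      obtain ⟨h1, h2, -⟩ := hend e he
      exact Finset.mem_product.mpr ⟨h1, h2⟩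
    · intro v hv
      rw [Finset.mem_Icc] at hv
      exact huniq v hv.1 hv.2
    · intro e he
      obtain ⟨h1, -, -⟩ := hend e he
      rw [Finset.mem_Icc] at h1
      omega
  · rintro ⟨hpow, hM, hBdd⟩
    have hcard : 2 * s.card = 2 * n := by
      rw [MatchAux.two_mul_card _ _ hM, Nat.card_Icc]
      omega
    refine ⟨by omega, ?_, ?_⟩
    · intro e he
      obtain ⟨h1, h2, h3⟩ := hM.1 e he
      rw [Finset.mem_Icc] at h1 h2
      exact ⟨h3, h1.1, h2.2⟩
    · intro v hv1 hv2
      exact hM.2 v (Finset.mem_Icc.mpr ⟨hv1, hv2⟩)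

lemma natCard_matching_eq_cnt (n k : ℕ) (f : Finset (ℕ × ℕ) → ℕ) :
    Nat.card {s : Finset (ℕ × ℕ) // IsMatching n s ∧ f s = k}
      = cnt (Finset.Icc 1 (2*n)) (2*n+1) f (fun m => m = k) := by
  unfold cnt
  rw [← Set.ncard_coe_finset, ← Nat.card_coe_set_eq]
  apply Nat.card_congr
  apply Equiv.subtypeEquivRight
  intro s
  simp only [Finset.mem_coe, Finset.mem_filter, isMatching_iff]
  tauto

end MatchAux

/-- de Sainte-Catherine: for every `k ≥ 0` and `n ≥ 1`, there are as many
matchings on `[2n]` with exactly `k` crossings as those with exactly `k` nestings. -/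
theorem card_crossings_eq_card_nestings (k n : ℕ) (hn : 1 ≤ n) :
    Nat.card {s : Finset (ℕ × ℕ) // IsMatching n s ∧ crStat s = k}
      = Nat.card {s : Finset (ℕ × ℕ) // IsMatching n s ∧ neStat s = k} := by
  rw [MatchAux.natCard_matching_eq_cnt n k crStat, MatchAux.natCard_matching_eq_cnt n k neStat]
  exact MatchAux.cnt_main (2*n) (Finset.Icc 1 (2*n))
    (by rw [Nat.card_Icc]; omega) (2*n+1) k
end
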